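/- arXiv:2507.08963 — 3 statements merged into one kernel-verified Lean document; each statement's English description precedes it below -/
import Mathlib

section
/- Uniform bound on expected squared distance (inequality (dist-upper-bound)): Suppose the aiming condition holds and α_s ≥ 0 with α_s·λ ≤ 1 for all s ≥ 0. Then for every t ≥ 1, E[‖x_t − x*‖²] ≤ E[‖x_0 − x*‖²] + B* · Σ_{s=0}^{t−1} α_s². -/
open MeasureTheory Filter

lemma bcosw_aux_div_condExp {Ω : Type*} {mΩ : MeasurableSpace Ω} {μ : Measure Ω}
    [IsProbabilityMeasure μ] {m : MeasurableSpace Ω} (hm : m ≤ mΩ)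
    {f : Ω → ℝ} (hf_meas : Measurable[mΩ] f) (hf_nonneg : ∀ ω, 0 ≤ f ω)
    (hf_int : Integrable f μ) (hc_pos : ∀ᵐ ω ∂μ, 0 < (μ[f|m]) ω) :
    Integrable (fun ω => f ω / (μ[f|m]) ω) μ ∧
      ∫ ω, f ω / (μ[f|m]) ω ∂μ ≤ 1 := by
  set c : Ω → ℝ := μ[f|m] with hc
  have hc_meas : Measurable[m] c := stronglyMeasurable_condExp.measurable
  have hc_meas' : Measurable[mΩ] c := hc_meas.mono hm le_rfl
  set Y : ℕ → Ω → ℝ := fun N ω => max 0 (min (c ω)⁻¹ N) with hY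
  have hY_nonneg : ∀ N ω, 0 ≤ Y N ω := fun N ω => le_max_left _ _
  have hY_sm : ∀ N, StronglyMeasurable[m] (Y N) := fun N =>
    (measurable_const.max (hc_meas.inv.min measurable_const)).stronglyMeasurable
  have hY_bdd : ∀ N ω, Y N ω ≤ N := by
    intro N ω
    exact max_le (Nat.cast_nonneg N) (min_le_right _ _)
  have hYf_int : ∀ N, Integrable (fun ω => Y N ω * f ω) μ := by
    intro N
    refine hf_int.bdd_mul ((hY_sm N).mono hm).aestronglyMeasurable (c := N) (Eventually.of_forall fun ω => ?_)
    rw [Real.norm_eq_abs, abs_of_nonneg (hY_nonneg N ω)]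
    exact hY_bdd N ω
  -- pull out
  have h_pull : ∀ N, μ[fun ω => Y N ω * f ω|m] =ᵐ[μ] fun ω => Y N ω * c ω := by
    intro N
    exact condExp_mul_of_stronglyMeasurable_left (hY_sm N) (hYf_int N) hf_int
  have h_int_le : ∀ N, ∫ ω, Y N ω * f ω ∂μ ≤ 1 := by
    intro N
    have h1 : ∫ ω, Y N ω * f ω ∂μ = ∫ ω, (μ[fun ω => Y N ω * f ω|m]) ω ∂μ :=
      (integral_condExp hm).symm
    have h2 : ∫ ω, (μ[fun ω => Y N ω * f ω|m]) ω ∂μ = ∫ ω, Y N ω * c ω ∂μ :=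
      integral_congr_ae (h_pull N)
    rw [h1, h2]
    have hle : ∀ᵐ ω ∂μ, Y N ω * c ω ≤ 1 := by
      filter_upwards [hc_pos] with ω hω
      have h3 : Y N ω ≤ (c ω)⁻¹ := max_le (inv_nonneg.mpr hω.le) (min_le_left _ _)
      calc Y N ω * c ω ≤ (c ω)⁻¹ * c ω := mul_le_mul_of_nonneg_right h3 hω.le
        _ = 1 := inv_mul_cancel₀ hω.ne'
    have hint : Integrable (fun ω => Y N ω * c ω) μ :=
      (integrable_condExp).bdd_mul ((hY_sm N).mono hm).aestronglyMeasurable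
        (c := N) (Eventually.of_forall fun ω => by rw [Real.norm_eq_abs, abs_of_nonneg (hY_nonneg N ω)]; exact hY_bdd N ω)
    calc ∫ ω, Y N ω * c ω ∂μ ≤ ∫ _ω, (1 : ℝ) ∂μ := integral_mono_ae hint (integrable_const 1) hle
      _ = 1 := by simp
  -- monotone convergence
  have h_mono : ∀ᵐ ω ∂μ, Monotone fun N => ENNReal.ofReal (Y N ω * f ω) := by
    refine Eventually.of_forall fun ω => ?_
    intro a b hab
    refine ENNReal.ofReal_le_ofReal (mul_le_mul_of_nonneg_right ?_ (hf_nonneg ω))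
    exact max_le_max le_rfl (min_le_min le_rfl (Nat.cast_le.mpr hab))
  have h_sup : ∀ᵐ ω ∂μ, (⨆ N, ENNReal.ofReal (Y N ω * f ω)) = ENNReal.ofReal (f ω / c ω) := by
    filter_upwards [hc_pos] with ω hω
    apply le_antisymm
    · refine iSup_le fun N => ENNReal.ofReal_le_ofReal ?_
      have h3 : Y N ω ≤ (c ω)⁻¹ := max_le (inv_nonneg.mpr hω.le) (min_le_left _ _)
      calc Y N ω * f ω ≤ (c ω)⁻¹ * f ω := mul_le_mul_of_nonneg_right h3 (hf_nonneg ω)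
        _ = f ω / c ω := by rw [div_eq_mul_inv, mul_comm]
    · have hN : Y ⌈(c ω)⁻¹⌉₊ ω = (c ω)⁻¹ := by
        rw [hY]
        simp only []
        rw [min_eq_left (Nat.le_ceil _), max_eq_right (inv_nonneg.mpr hω.le)]
      refine le_trans (le_of_eq ?_) (le_iSup _ ⌈(c ω)⁻¹⌉₊)
      rw [hN, div_eq_mul_inv, mul_comm]
  have h_lint : ∫⁻ ω, ENNReal.ofReal (f ω / c ω) ∂μ ≤ 1 := by
    have e1 : ∫⁻ ω, ENNReal.ofReal (f ω / c ω) ∂μ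
        = ∫⁻ ω, ⨆ N, ENNReal.ofReal (Y N ω * f ω) ∂μ :=
      lintegral_congr_ae (h_sup.mono fun ω h => h.symm)
    have e2 : ∫⁻ ω, ⨆ N, ENNReal.ofReal (Y N ω * f ω) ∂μ
        = ⨆ N, ∫⁻ ω, ENNReal.ofReal (Y N ω * f ω) ∂μ := by
      refine lintegral_iSup' (fun N => ?_) h_mono
      exact (ENNReal.measurable_ofReal.comp
        ((((hY_sm N).mono hm).measurable.mul hf_meas))).aemeasurable
    have e3 : ∀ N, ∫⁻ ω, ENNReal.ofReal (Y N ω * f ω) ∂μ ≤ 1 := by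
      intro N
      rw [← ofReal_integral_eq_lintegral_ofReal (hYf_int N)
        (Eventually.of_forall fun ω => mul_nonneg (hY_nonneg N ω) (hf_nonneg ω))]
      exact ENNReal.ofReal_le_one.mpr (h_int_le N)
    rw [e1, e2]
    exact iSup_le e3
  have hdiv_meas : AEStronglyMeasurable[mΩ] (fun ω => f ω / c ω) μ :=
    (hf_meas.div hc_meas').aestronglyMeasurable
  have hdiv_nonneg : ∀ᵐ ω ∂μ, 0 ≤ f ω / c ω := by
    filter_upwards [hc_pos] with ω hω
    exact div_nonneg (hf_nonneg ω) hω.le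
  have hdiv_int : Integrable (fun ω => f ω / c ω) μ := by
    refine ⟨hdiv_meas, ?_⟩
    rw [hasFiniteIntegral_iff_norm]
    have : ∫⁻ ω, ENNReal.ofReal ‖f ω / c ω‖ ∂μ = ∫⁻ ω, ENNReal.ofReal (f ω / c ω) ∂μ := by
      refine lintegral_congr_ae ?_
      filter_upwards [hdiv_nonneg] with ω hω
      rw [Real.norm_eq_abs, abs_of_nonneg hω]
    rw [this]
    exact lt_of_le_of_lt h_lint ENNReal.one_lt_top
  refine ⟨hdiv_int, ?_⟩
  rw [← ENNReal.ofReal_le_one, ofReal_integral_eq_lintegral_ofReal hdiv_int hdiv_nonneg]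
  exact h_lint

lemma bcosw_aux_int_mul {Ω : Type*} {mΩ : MeasurableSpace Ω} {μ : Measure Ω}
    {f g : Ω → ℝ} (hf : MemLp f 2 μ) (hg : MemLp g 2 μ) :
    Integrable (fun ω => f ω * g ω) μ := by
  have h : (1 : ENNReal) / 1 = 1 / 2 + 1 / 2 := by
    rw [ENNReal.add_halves]; norm_num
  have := memLp_one_iff_integrable.mp (hf.smul hg (p := 2) (q := 2) (r := 1))
  exact (by simpa [smul_eq_mul, mul_comm] using this : Integrable (f * g) μ)

lemma bcosw_aux_dh {Ω : Type*} {mΩ : MeasurableSpace Ω} {μ : Measure Ω}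
    [IsProbabilityMeasure μ] {m : MeasurableSpace Ω} (hm : m ≤ mΩ)
    {g : Ω → ℝ} (hg_meas : Measurable[mΩ] g)
    (hg_sq_int : Integrable (fun ω => g ω ^ 2) μ)
    (hc_pos : ∀ᵐ ω ∂μ, 0 < (μ[fun ω' => g ω' ^ 2|m]) ω) :
    MemLp (fun ω => g ω / Real.sqrt ((μ[fun ω' => g ω' ^ 2|m]) ω)) 2 μ ∧
      ∫ ω, (g ω / Real.sqrt ((μ[fun ω' => g ω' ^ 2|m]) ω)) ^ 2 ∂μ ≤ 1 := by
  have hgm2 : Measurable[mΩ] fun ω => g ω ^ 2 := hg_meas.pow_const 2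
  have hdiv := bcosw_aux_div_condExp hm hgm2 (fun ω => sq_nonneg _) hg_sq_int hc_pos
  have hsc_meas : Measurable[mΩ]
      fun ω => Real.sqrt ((μ[fun ω' => g ω' ^ 2|m]) ω) :=
    (stronglyMeasurable_condExp.measurable.mono hm le_rfl).sqrt
  have hdh_meas : Measurable[mΩ]
      fun ω => g ω / Real.sqrt ((μ[fun ω' => g ω' ^ 2|m]) ω) := hg_meas.div hsc_meas
  have hsq_eq : (fun ω => (g ω / Real.sqrt ((μ[fun ω' => g ω' ^ 2|m]) ω)) ^ 2)
      =ᵐ[μ] fun ω => g ω ^ 2 / (μ[fun ω' => g ω' ^ 2|m]) ω := by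
    filter_upwards [hc_pos] with ω hω
    rw [div_pow, Real.sq_sqrt hω.le]
  have hint : Integrable
      (fun ω => (g ω / Real.sqrt ((μ[fun ω' => g ω' ^ 2|m]) ω)) ^ 2) μ :=
    hdiv.1.congr hsq_eq.symm
  refine ⟨(memLp_two_iff_integrable_sq hdh_meas.aestronglyMeasurable).2 hint, ?_⟩
  rw [integral_congr_ae hsq_eq]
  exact hdiv.2

lemma bcosw_step {Ω : Type*} {mΩ : MeasurableSpace Ω} {μ : Measure Ω}
    [IsProbabilityMeasure μ] {m : MeasurableSpace Ω} (hm : m ≤ mΩ)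
    {n : ℕ} {lam a : ℝ} {xstar : Fin n → ℝ} {xt xt1 : Ω → Fin n → ℝ} {dd : Ω → Fin n → ℝ}
    (hlam : 0 ≤ lam) (ha : 0 ≤ a) (halam : a * lam ≤ 1)
    (hdd_meas : ∀ k, Measurable[mΩ] fun ω => dd ω k)
    (hdd_sq_int : ∀ k, Integrable (fun ω => dd ω k ^ 2) μ)
    (hc_pos : ∀ k, ∀ᵐ ω ∂μ, 0 < (μ[fun ω' => dd ω' k ^ 2|m]) ω)
    (hxt_meas : ∀ k, Measurable[m] fun ω => xt ω k)
    (hxt_memLp : ∀ k, MemLp (fun ω => xt ω k) 2 μ)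
    (hiter : ∀ ω k, xt1 ω k = (1 - a * lam) * xt ω k
      - a * (dd ω k / Real.sqrt ((μ[fun ω' => dd ω' k ^ 2|m]) ω)))
    (haim : ∀ᵐ ω ∂μ,
      (∑ k, (xt ω k - xstar k) *
          ((μ[fun ω' => dd ω' k|m]) ω / Real.sqrt ((μ[fun ω' => dd ω' k ^ 2|m]) ω)
            + lam * xt ω k))
        ≥ lam * ∑ k, (xt ω k - xstar k) ^ 2) :
    ∫ ω, ∑ k, (xt1 ω k - xstar k) ^ 2 ∂μ
      ≤ ∫ ω, ∑ k, (xt ω k - xstar k) ^ 2 ∂μ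
        + a ^ 2 * ((n : ℝ) + lam ^ 2 * (∑ k, (xstar k) ^ 2) + 2 * lam * ∑ k, |xstar k|) := by
  -- basic facts
  have hdd_memLp : ∀ k, MemLp (fun ω => dd ω k) 2 μ := fun k =>
    (memLp_two_iff_integrable_sq (hdd_meas k).aestronglyMeasurable).2 (hdd_sq_int k)
  have hsc_meas : ∀ k, Measurable[m]
      fun ω => Real.sqrt ((μ[fun ω' => dd ω' k ^ 2|m]) ω) := fun k =>
    (stronglyMeasurable_condExp.measurable).sqrt
  have hdhfacts := fun k => bcosw_aux_dh hm (hdd_meas k) (hdd_sq_int k) (hc_pos k)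
  have hdh_memLp : ∀ k, MemLp
      (fun ω => dd ω k / Real.sqrt ((μ[fun ω' => dd ω' k ^ 2|m]) ω)) 2 μ := fun k =>
    (hdhfacts k).1
  have hdh_sq_le : ∀ k,
      ∫ ω, (dd ω k / Real.sqrt ((μ[fun ω' => dd ω' k ^ 2|m]) ω)) ^ 2 ∂μ ≤ 1 := fun k =>
    (hdhfacts k).2
  have hdh_int : ∀ k, Integrable
      (fun ω => dd ω k / Real.sqrt ((μ[fun ω' => dd ω' k ^ 2|m]) ω)) μ := fun k =>
    (hdh_memLp k).integrable one_le_two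
  have hdh_mean : ∀ k,
      |∫ ω, dd ω k / Real.sqrt ((μ[fun ω' => dd ω' k ^ 2|m]) ω) ∂μ| ≤ 1 := by
    intro k
    have hv := ProbabilityTheory.variance_nonneg
      (fun ω => dd ω k / Real.sqrt ((μ[fun ω' => dd ω' k ^ 2|m]) ω)) μ
    rw [ProbabilityTheory.variance_eq_sub (hdh_memLp k)] at hv
    simp only [Pi.pow_apply] at hv
    have h1 : (∫ ω, dd ω k / Real.sqrt ((μ[fun ω' => dd ω' k ^ 2|m]) ω) ∂μ) ^ 2 ≤ 1 :=
      le_trans (by linarith) (hdh_sq_le k)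
    nlinarith [sq_abs (∫ ω, dd ω k / Real.sqrt ((μ[fun ω' => dd ω' k ^ 2|m]) ω) ∂μ),
      abs_nonneg (∫ ω, dd ω k / Real.sqrt ((μ[fun ω' => dd ω' k ^ 2|m]) ω) ∂μ)]
  have hD_memLp : ∀ k, MemLp (fun ω => xt ω k - xstar k) 2 μ := fun k =>
    (hxt_memLp k).sub (memLp_const (xstar k))
  have hD_int : ∀ k, Integrable (fun ω => xt ω k - xstar k) μ := fun k =>
    (hD_memLp k).integrable one_le_two
  -- pull-out property per coordinate
  have hpull : ∀ k, (∫ ω, (xt ω k - xstar k)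
          * (dd ω k / Real.sqrt ((μ[fun ω' => dd ω' k ^ 2|m]) ω)) ∂μ
        = ∫ ω, (xt ω k - xstar k)
          * ((μ[fun ω' => dd ω' k|m]) ω / Real.sqrt ((μ[fun ω' => dd ω' k ^ 2|m]) ω)) ∂μ)
      ∧ Integrable (fun ω => (xt ω k - xstar k)
          * ((μ[fun ω' => dd ω' k|m]) ω / Real.sqrt ((μ[fun ω' => dd ω' k ^ 2|m]) ω))) μ := by
    intro k
    set Y : Ω → ℝ := fun ω => (xt ω k - xstar k)
      / Real.sqrt ((μ[fun ω' => dd ω' k ^ 2|m]) ω) with hY_def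
    have hY_sm : StronglyMeasurable[m] Y :=
      (((hxt_meas k).sub measurable_const).div (hsc_meas k)).stronglyMeasurable
    have hfg_eq : (Y * fun ω => dd ω k) = fun ω => (xt ω k - xstar k)
        * (dd ω k / Real.sqrt ((μ[fun ω' => dd ω' k ^ 2|m]) ω)) := by
      funext ω
      simp only [Pi.mul_apply, hY_def]
      rw [div_mul_eq_mul_div, mul_div_assoc]
    have hfg_int : Integrable (Y * fun ω => dd ω k) μ := by
      rw [hfg_eq]
      exact bcosw_aux_int_mul (hD_memLp k) (hdh_memLp k)
    have hdd_int : Integrable (fun ω => dd ω k) μ := (hdd_memLp k).integrable one_le_two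
    have hpull0 := condExp_mul_of_stronglyMeasurable_left hY_sm hfg_int hdd_int
    have hE_eq : (Y * μ[fun ω => dd ω k|m]) = fun ω => (xt ω k - xstar k)
        * ((μ[fun ω' => dd ω' k|m]) ω / Real.sqrt ((μ[fun ω' => dd ω' k ^ 2|m]) ω)) := by
      funext ω
      simp only [Pi.mul_apply, hY_def]
      rw [div_mul_eq_mul_div, mul_div_assoc]
    constructor
    · calc ∫ ω, (xt ω k - xstar k)
            * (dd ω k / Real.sqrt ((μ[fun ω' => dd ω' k ^ 2|m]) ω)) ∂μ
          = ∫ ω, (Y * fun ω => dd ω k) ω ∂μ := by rw [hfg_eq]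
        _ = ∫ ω, (μ[Y * fun ω => dd ω k|m]) ω ∂μ := (integral_condExp hm).symm
        _ = ∫ ω, (Y * μ[fun ω => dd ω k|m]) ω ∂μ := integral_congr_ae hpull0
        _ = _ := by rw [hE_eq]
    · have h2 := (integrable_condExp (f := Y * fun ω => dd ω k) (m := m)).congr hpull0
      rwa [hE_eq] at h2
  -- cross term is nonnegative
  have hcross : 0 ≤ ∫ ω, ∑ k, (xt ω k - xstar k)
      * (dd ω k / Real.sqrt ((μ[fun ω' => dd ω' k ^ 2|m]) ω) + lam * xstar k) ∂μ := by
    have hint1 : ∀ k, Integrable (fun ω => (xt ω k - xstar k)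
        * (dd ω k / Real.sqrt ((μ[fun ω' => dd ω' k ^ 2|m]) ω) + lam * xstar k)) μ := fun k =>
      bcosw_aux_int_mul (hD_memLp k) ((hdh_memLp k).add (memLp_const _))
    have hint2 : ∀ k, Integrable (fun ω => (xt ω k - xstar k)
        * ((μ[fun ω' => dd ω' k|m]) ω / Real.sqrt ((μ[fun ω' => dd ω' k ^ 2|m]) ω)
          + lam * xstar k)) μ := by
      intro k
      refine ((hpull k).2.add ((hD_int k).mul_const (lam * xstar k))).congr
        (Eventually.of_forall fun ω => ?_)
      simp only [Pi.add_apply]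
      ring
    have hsplit : ∀ k, ∫ ω, (xt ω k - xstar k)
        * (dd ω k / Real.sqrt ((μ[fun ω' => dd ω' k ^ 2|m]) ω) + lam * xstar k) ∂μ
        = ∫ ω, (xt ω k - xstar k)
            * (dd ω k / Real.sqrt ((μ[fun ω' => dd ω' k ^ 2|m]) ω)) ∂μ
          + ∫ ω, (xt ω k - xstar k) * (lam * xstar k) ∂μ := by
      intro k
      rw [← integral_add (bcosw_aux_int_mul (hD_memLp k) (hdh_memLp k))
        ((hD_int k).mul_const _)]
      congr 1; funext ω; ring
    have hsplit2 : ∀ k, ∫ ω, (xt ω k - xstar k)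
        * ((μ[fun ω' => dd ω' k|m]) ω / Real.sqrt ((μ[fun ω' => dd ω' k ^ 2|m]) ω)
          + lam * xstar k) ∂μ
        = ∫ ω, (xt ω k - xstar k)
            * ((μ[fun ω' => dd ω' k|m]) ω / Real.sqrt ((μ[fun ω' => dd ω' k ^ 2|m]) ω)) ∂μ
          + ∫ ω, (xt ω k - xstar k) * (lam * xstar k) ∂μ := by
      intro k
      rw [← integral_add (hpull k).2 ((hD_int k).mul_const _)]
      congr 1; funext ω; ring
    have heq : ∫ ω, ∑ k, (xt ω k - xstar k)
        * (dd ω k / Real.sqrt ((μ[fun ω' => dd ω' k ^ 2|m]) ω) + lam * xstar k) ∂μ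
        = ∫ ω, ∑ k, (xt ω k - xstar k)
        * ((μ[fun ω' => dd ω' k|m]) ω / Real.sqrt ((μ[fun ω' => dd ω' k ^ 2|m]) ω)
          + lam * xstar k) ∂μ := by
      rw [integral_finset_sum _ fun k _ => hint1 k,
        integral_finset_sum _ fun k _ => hint2 k]
      exact Finset.sum_congr rfl fun k _ => by rw [hsplit k, hsplit2 k, (hpull k).1]
    rw [heq]
    refine integral_nonneg_of_ae ?_
    filter_upwards [haim] with ω hω
    simp only [Pi.zero_apply]
    have hrew : ∑ k, (xt ω k - xstar k)
        * ((μ[fun ω' => dd ω' k|m]) ω / Real.sqrt ((μ[fun ω' => dd ω' k ^ 2|m]) ω)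
          + lam * xstar k)
        = (∑ k, (xt ω k - xstar k) *
          ((μ[fun ω' => dd ω' k|m]) ω / Real.sqrt ((μ[fun ω' => dd ω' k ^ 2|m]) ω)
            + lam * xt ω k)) - lam * ∑ k, (xt ω k - xstar k) ^ 2 := by
      rw [Finset.mul_sum, ← Finset.sum_sub_distrib]
      exact Finset.sum_congr rfl fun k _ => by ring
    rw [hrew]
    linarith [hω]
  -- second moment bound
  have hQ : ∫ ω, ∑ k, (dd ω k / Real.sqrt ((μ[fun ω' => dd ω' k ^ 2|m]) ω)
        + lam * xstar k) ^ 2 ∂μ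
      ≤ (n : ℝ) + lam ^ 2 * (∑ k, (xstar k) ^ 2) + 2 * lam * ∑ k, |xstar k| := by
    have hsq_int : ∀ k, Integrable (fun ω =>
        (dd ω k / Real.sqrt ((μ[fun ω' => dd ω' k ^ 2|m]) ω) + lam * xstar k) ^ 2) μ :=
      fun k => ((hdh_memLp k).add (memLp_const _)).integrable_sq
    rw [integral_finset_sum _ fun k _ => hsq_int k]
    have hterm : ∀ k, ∫ ω, (dd ω k / Real.sqrt ((μ[fun ω' => dd ω' k ^ 2|m]) ω)
          + lam * xstar k) ^ 2 ∂μ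
        ≤ 1 + 2 * lam * |xstar k| + lam ^ 2 * (xstar k) ^ 2 := by
      intro k
      have hexp : ∫ ω, (dd ω k / Real.sqrt ((μ[fun ω' => dd ω' k ^ 2|m]) ω)
            + lam * xstar k) ^ 2 ∂μ
          = ∫ ω, (dd ω k / Real.sqrt ((μ[fun ω' => dd ω' k ^ 2|m]) ω)) ^ 2 ∂μ
            + ((2 * (lam * xstar k)) * ∫ ω, dd ω k
                / Real.sqrt ((μ[fun ω' => dd ω' k ^ 2|m]) ω) ∂μ
              + (lam * xstar k) ^ 2) := by
        calc ∫ ω, (dd ω k / Real.sqrt ((μ[fun ω' => dd ω' k ^ 2|m]) ω)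
              + lam * xstar k) ^ 2 ∂μ
            = ∫ ω, ((dd ω k / Real.sqrt ((μ[fun ω' => dd ω' k ^ 2|m]) ω)) ^ 2
              + (2 * (lam * xstar k) * (dd ω k / Real.sqrt ((μ[fun ω' => dd ω' k ^ 2|m]) ω))
                + (lam * xstar k) ^ 2)) ∂μ := by
              congr 1; funext ω; ring
          _ = ∫ ω, (dd ω k / Real.sqrt ((μ[fun ω' => dd ω' k ^ 2|m]) ω)) ^ 2 ∂μ
              + ∫ ω, (2 * (lam * xstar k) * (dd ω k
                  / Real.sqrt ((μ[fun ω' => dd ω' k ^ 2|m]) ω))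
                + (lam * xstar k) ^ 2) ∂μ :=
              integral_add ((hdhfacts k).1.integrable_sq)
                (((hdh_int k).const_mul _).add (integrable_const _))
          _ = _ := by
              rw [integral_add ((hdh_int k).const_mul _) (integrable_const _),
                integral_const_mul, integral_const]
              simp
      rw [hexp]
      have h2 : (2 * (lam * xstar k)) * ∫ ω, dd ω k
            / Real.sqrt ((μ[fun ω' => dd ω' k ^ 2|m]) ω) ∂μ
          ≤ 2 * lam * |xstar k| := by
        calc (2 * (lam * xstar k)) * ∫ ω, dd ω k
              / Real.sqrt ((μ[fun ω' => dd ω' k ^ 2|m]) ω) ∂μ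
            ≤ |(2 * (lam * xstar k)) * ∫ ω, dd ω k
              / Real.sqrt ((μ[fun ω' => dd ω' k ^ 2|m]) ω) ∂μ| := le_abs_self _
          _ = (2 * lam * |xstar k|) * |∫ ω, dd ω k
              / Real.sqrt ((μ[fun ω' => dd ω' k ^ 2|m]) ω) ∂μ| := by
              rw [abs_mul, abs_mul, abs_mul]
              rw [abs_of_nonneg (by norm_num : (0:ℝ) ≤ 2), abs_of_nonneg hlam]
              ring
          _ ≤ (2 * lam * |xstar k|) * 1 := by
              refine mul_le_mul_of_nonneg_left (hdh_mean k) ?_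
              positivity
          _ = 2 * lam * |xstar k| := mul_one _
      have h3 : (lam * xstar k) ^ 2 = lam ^ 2 * (xstar k) ^ 2 := by ring
      linarith [hdh_sq_le k]
    calc ∑ k, ∫ ω, (dd ω k / Real.sqrt ((μ[fun ω' => dd ω' k ^ 2|m]) ω)
          + lam * xstar k) ^ 2 ∂μ
        ≤ ∑ k : Fin n, (1 + 2 * lam * |xstar k| + lam ^ 2 * (xstar k) ^ 2) :=
          Finset.sum_le_sum fun k _ => hterm k
      _ = (n : ℝ) + lam ^ 2 * (∑ k, (xstar k) ^ 2) + 2 * lam * ∑ k, |xstar k| := by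
          rw [Finset.sum_add_distrib, Finset.sum_add_distrib, Finset.sum_const,
            Finset.card_univ, Fintype.card_fin, ← Finset.mul_sum, ← Finset.mul_sum]
          simp [nsmul_eq_mul]
          ring
  -- combine
  have hI_nonneg : 0 ≤ ∫ ω, ∑ k, (xt ω k - xstar k) ^ 2 ∂μ :=
    integral_nonneg fun ω => Finset.sum_nonneg fun k _ => sq_nonneg _
  have hptw : ∀ ω, ∑ k, (xt1 ω k - xstar k) ^ 2
      = (1 - a * lam) ^ 2 * (∑ k, (xt ω k - xstar k) ^ 2)
        - (2 * a * (1 - a * lam)) * (∑ k, (xt ω k - xstar k)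
          * (dd ω k / Real.sqrt ((μ[fun ω' => dd ω' k ^ 2|m]) ω) + lam * xstar k))
        + a ^ 2 * (∑ k, (dd ω k / Real.sqrt ((μ[fun ω' => dd ω' k ^ 2|m]) ω)
          + lam * xstar k) ^ 2) := by
    intro ω
    rw [Finset.mul_sum, Finset.mul_sum, Finset.mul_sum, ← Finset.sum_sub_distrib,
      ← Finset.sum_add_distrib]
    refine Finset.sum_congr rfl fun k _ => ?_
    rw [hiter ω k]
    ring
  have hIsplit : ∫ ω, ∑ k, (xt1 ω k - xstar k) ^ 2 ∂μ
      = (1 - a * lam) ^ 2 * ∫ ω, ∑ k, (xt ω k - xstar k) ^ 2 ∂μ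
        - (2 * a * (1 - a * lam)) * ∫ ω, ∑ k, (xt ω k - xstar k)
          * (dd ω k / Real.sqrt ((μ[fun ω' => dd ω' k ^ 2|m]) ω) + lam * xstar k) ∂μ
        + a ^ 2 * ∫ ω, ∑ k, (dd ω k / Real.sqrt ((μ[fun ω' => dd ω' k ^ 2|m]) ω)
          + lam * xstar k) ^ 2 ∂μ := by
    have hint_u : Integrable (fun ω => ∑ k, (xt ω k - xstar k) ^ 2) μ :=
      integrable_finset_sum _ fun k _ => (hD_memLp k).integrable_sq
    have hint_v : Integrable (fun ω => ∑ k, (xt ω k - xstar k)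
        * (dd ω k / Real.sqrt ((μ[fun ω' => dd ω' k ^ 2|m]) ω) + lam * xstar k)) μ :=
      integrable_finset_sum _ fun k _ =>
        bcosw_aux_int_mul (hD_memLp k) ((hdh_memLp k).add (memLp_const _))
    have hint_w : Integrable (fun ω => ∑ k,
        (dd ω k / Real.sqrt ((μ[fun ω' => dd ω' k ^ 2|m]) ω) + lam * xstar k) ^ 2) μ :=
      integrable_finset_sum _ fun k _ => ((hdh_memLp k).add (memLp_const _)).integrable_sq
    have h1 : Integrable (fun ω => (1 - a * lam) ^ 2 * (∑ k, (xt ω k - xstar k) ^ 2)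
        - (2 * a * (1 - a * lam)) * (∑ k, (xt ω k - xstar k)
          * (dd ω k / Real.sqrt ((μ[fun ω' => dd ω' k ^ 2|m]) ω) + lam * xstar k))) μ :=
      (hint_u.const_mul _).sub (hint_v.const_mul _)
    have h2 : Integrable (fun ω => a ^ 2 * (∑ k,
        (dd ω k / Real.sqrt ((μ[fun ω' => dd ω' k ^ 2|m]) ω) + lam * xstar k) ^ 2)) μ :=
      hint_w.const_mul _
    have h3 : Integrable (fun ω => (1 - a * lam) ^ 2
        * (∑ k, (xt ω k - xstar k) ^ 2)) μ := hint_u.const_mul _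
    have h4 : Integrable (fun ω => (2 * a * (1 - a * lam)) * (∑ k, (xt ω k - xstar k)
        * (dd ω k / Real.sqrt ((μ[fun ω' => dd ω' k ^ 2|m]) ω) + lam * xstar k))) μ :=
      hint_v.const_mul _
    simp only [hptw]
    rw [integral_add h1 h2, integral_sub h3 h4,
      integral_const_mul, integral_const_mul, integral_const_mul]
  rw [hIsplit]
  have hA0 : 0 ≤ 1 - a * lam := by linarith
  have hA1 : (1 - a * lam) ^ 2 ≤ 1 := by nlinarith [mul_nonneg ha hlam]
  have t1 : (1 - a * lam) ^ 2 * ∫ ω, ∑ k, (xt ω k - xstar k) ^ 2 ∂μ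
      ≤ ∫ ω, ∑ k, (xt ω k - xstar k) ^ 2 ∂μ :=
    mul_le_of_le_one_left hI_nonneg hA1 |>.trans_eq rfl
  have t2 : 0 ≤ (2 * a * (1 - a * lam)) * ∫ ω, ∑ k, (xt ω k - xstar k)
      * (dd ω k / Real.sqrt ((μ[fun ω' => dd ω' k ^ 2|m]) ω) + lam * xstar k) ∂μ := by
    refine mul_nonneg (by positivity) hcross
  have t3 : a ^ 2 * ∫ ω, ∑ k, (dd ω k / Real.sqrt ((μ[fun ω' => dd ω' k ^ 2|m]) ω)
        + lam * xstar k) ^ 2 ∂μ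
      ≤ a ^ 2 * ((n : ℝ) + lam ^ 2 * (∑ k, (xstar k) ^ 2) + 2 * lam * ∑ k, |xstar k|) :=
    mul_le_mul_of_nonneg_left hQ (sq_nonneg a)
  linarith

/-- Uniform bound on expected squared distance (inequality (dist-upper-bound)). -/
theorem bcosw_dist_upper_bound
    {Ω : Type*} {mΩ : MeasurableSpace Ω} {μ : Measure Ω} [IsProbabilityMeasure μ]
    (F : ℕ → MeasurableSpace Ω) (hF_le : ∀ t, F t ≤ mΩ) (hF_mono : Monotone F)
    {n : ℕ} (hn : 1 ≤ n) (lam : ℝ) (hlam : 0 ≤ lam)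
    (xstar : Fin n → ℝ) (α : ℕ → ℝ)
    (hα : ∀ s, 0 ≤ α s) (hαlam : ∀ s, α s * lam ≤ 1)
    (d : ℕ → Ω → Fin n → ℝ)
    (hd_meas : ∀ t k, Measurable[F (t + 1)] fun ω => d t ω k)
    (hd_sq_int : ∀ t k, Integrable (fun ω => (d t ω k) ^ 2) μ)
    (hd2_pos : ∀ t k, ∀ᵐ ω ∂μ, 0 < (μ[fun ω' => (d t ω' k) ^ 2|F t]) ω)
    (x : ℕ → Ω → Fin n → ℝ)
    (hx0_meas : ∀ k, Measurable[F 0] fun ω => x 0 ω k)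
    (hx0_sq_int : ∀ k, Integrable (fun ω => (x 0 ω k) ^ 2) μ)
    (hiter : ∀ t ω k, x (t + 1) ω k
      = (1 - α t * lam) * x t ω k
        - α t * (d t ω k / Real.sqrt ((μ[fun ω' => (d t ω' k) ^ 2|F t]) ω)))
    (haiming : ∀ t, ∀ᵐ ω ∂μ,
      (∑ k, (x t ω k - xstar k) *
          ((μ[fun ω' => d t ω' k|F t]) ω
              / Real.sqrt ((μ[fun ω' => (d t ω' k) ^ 2|F t]) ω)
            + lam * x t ω k))
        ≥ lam * ∑ k, (x t ω k - xstar k) ^ 2)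
    (Bstar : ℝ)
    (hBstar : Bstar = (n : ℝ) + lam ^ 2 * (∑ k, (xstar k) ^ 2)
        + 2 * lam * ∑ k, |xstar k|) :
    ∀ t : ℕ, 1 ≤ t →
      (∫ ω, ∑ k, (x t ω k - xstar k) ^ 2 ∂μ)
        ≤ (∫ ω, ∑ k, (x 0 ω k - xstar k) ^ 2 ∂μ)
          + Bstar * ∑ s ∈ Finset.range t, (α s) ^ 2 := by
  subst hBstar
  have hd_measΩ : ∀ t k, Measurable[mΩ] fun ω => d t ω k := fun t k =>
    (hd_meas t k).mono (hF_le (t + 1)) le_rfl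
  have hxfacts : ∀ t, (∀ k, Measurable[F t] fun ω => x t ω k)
      ∧ (∀ k, MemLp (fun ω => x t ω k) 2 μ) := by
    intro t
    induction t with
    | zero =>
      refine ⟨hx0_meas, fun k => ?_⟩
      exact (memLp_two_iff_integrable_sq
        ((hx0_meas k).mono (hF_le 0) le_rfl).aestronglyMeasurable).2 (hx0_sq_int k)
    | succ t ih =>
      have hfun : ∀ k, (fun ω => x (t + 1) ω k)
          = fun ω => (1 - α t * lam) * x t ω k
            - α t * (d t ω k / Real.sqrt ((μ[fun ω' => (d t ω' k) ^ 2|F t]) ω)) :=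
        fun k => funext fun ω => hiter t ω k
      have hdh := fun k =>
        bcosw_aux_dh (hF_le t) (hd_measΩ t k) (hd_sq_int t k) (hd2_pos t k)
      constructor
      · intro k
        rw [hfun k]
        have h1 : Measurable[F (t + 1)] fun ω => x t ω k :=
          (ih.1 k).mono (hF_mono (Nat.le_succ t)) le_rfl
        have h2 : Measurable[F (t + 1)]
            fun ω => d t ω k / Real.sqrt ((μ[fun ω' => (d t ω' k) ^ 2|F t]) ω) :=
          (hd_meas t k).div
            ((stronglyMeasurable_condExp.measurable.mono
              (hF_mono (Nat.le_succ t)) le_rfl).sqrt)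
        exact (measurable_const.mul h1).sub (measurable_const.mul h2)
      · intro k
        rw [hfun k]
        exact ((ih.2 k).const_mul _).sub (((hdh k).1).const_mul _)
  have hstep : ∀ t, ∫ ω, ∑ k, (x (t + 1) ω k - xstar k) ^ 2 ∂μ
      ≤ ∫ ω, ∑ k, (x t ω k - xstar k) ^ 2 ∂μ
        + (α t) ^ 2 * ((n : ℝ) + lam ^ 2 * (∑ k, (xstar k) ^ 2)
          + 2 * lam * ∑ k, |xstar k|) := fun t =>
    bcosw_step (hF_le t) hlam (hα t) (hαlam t) (hd_measΩ t) (hd_sq_int t)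
      (hd2_pos t) (hxfacts t).1 (hxfacts t).2 (fun ω k => hiter t ω k) (haiming t)
  have key : ∀ t, ∫ ω, ∑ k, (x t ω k - xstar k) ^ 2 ∂μ
      ≤ (∫ ω, ∑ k, (x 0 ω k - xstar k) ^ 2 ∂μ)
        + ((n : ℝ) + lam ^ 2 * (∑ k, (xstar k) ^ 2) + 2 * lam * ∑ k, |xstar k|)
          * ∑ s ∈ Finset.range t, (α s) ^ 2 := by
    intro t
    induction t with
    | zero => simp
    | succ t ih =>
      calc ∫ ω, ∑ k, (x (t + 1) ω k - xstar k) ^ 2 ∂μ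
          ≤ ∫ ω, ∑ k, (x t ω k - xstar k) ^ 2 ∂μ
            + (α t) ^ 2 * ((n : ℝ) + lam ^ 2 * (∑ k, (xstar k) ^ 2)
              + 2 * lam * ∑ k, |xstar k|) := hstep t
        _ ≤ ((∫ ω, ∑ k, (x 0 ω k - xstar k) ^ 2 ∂μ)
            + ((n : ℝ) + lam ^ 2 * (∑ k, (xstar k) ^ 2) + 2 * lam * ∑ k, |xstar k|)
              * ∑ s ∈ Finset.range t, (α s) ^ 2)
            + (α t) ^ 2 * ((n : ℝ) + lam ^ 2 * (∑ k, (xstar k) ^ 2)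
              + 2 * lam * ∑ k, |xstar k|) := add_le_add_left ih _
        _ = _ := by
            rw [Finset.sum_range_succ]
            ring
  exact fun t _ => key t
end

section
/- Extension of Dvoretzky's theorem (Theorem 5.10): Let (Ω, F, P) be a probability space, x* ∈ ℝⁿ, and let (x_t)_{t≥0} and (y_t)_{t≥0} be sequences of ℝⁿ-valued random vectors such that x_{t+1}(ω) = T_t(x_0(ω), …, x_t(ω)) + y_t(ω) for all t ≥ 0, where each T_t : (ℝⁿ)^{t+1} → ℝⁿ is measurable. Suppose there are nonnegative real sequences (a_t), (b_t), (c_t), (h_t) with lim_{t→∞} a_t = a_∞, Σ b_t < ∞, Σ c_t = ∞, Σ h_t < ∞, such that for every t and every tuple (x_0, …, x_t) ∈ (ℝⁿ)^{t+1}: ‖T_t(x_0, …, x_t) − x*‖² ≤ max{ a_t, (1 + b_t)‖x_t − x*‖² − c_t + h_t }. Suppose moreover that E[‖x_0‖²] < ∞, Σ_{t=0}^∞ E[‖y_t‖²] < ∞, and E[y_t | σ(x_0, …, x_t)] = 0 almost surely for every t. Then, with probability one, limsup_{t→∞} ‖x_t − x*‖² ≤ a_∞. -/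
open MeasureTheory Filter
open scoped ENNReal NNReal

namespace DvoAux


/-- Tail control from convergence of partial sums. -/
lemma cauchy_tail (f : ℕ → ℝ) (L : ℝ)
    (hf : Tendsto (fun N => ∑ s ∈ Finset.range N, f s) atTop (nhds L))
    {d : ℝ} (hd : 0 < d) :
    ∃ T, ∀ t₀ N, T ≤ t₀ → t₀ ≤ N → |∑ s ∈ Finset.Ico t₀ N, f s| ≤ d := by
  have h2 : ∀ᶠ N in atTop, |(∑ s ∈ Finset.range N, f s) - L| ≤ d / 2 := by
    have := Metric.tendsto_atTop.1 hf (d / 2) (by linarith)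
    obtain ⟨T, hT⟩ := this
    exact eventually_atTop.2 ⟨T, fun N hN => (hT N hN).le⟩
  obtain ⟨T, hT⟩ := eventually_atTop.1 h2
  refine ⟨T, fun t₀ N ht₀ htN => ?_⟩
  rw [Finset.sum_Ico_eq_sub _ htN]
  have h1 := hT N (le_trans ht₀ htN)
  have h2 := hT t₀ ht₀
  have key : |(∑ s ∈ Finset.range N, f s) - ∑ s ∈ Finset.range t₀, f s|
      ≤ |(∑ s ∈ Finset.range N, f s) - L| + |(∑ s ∈ Finset.range t₀, f s) - L| := by
    have := abs_sub_abs_le_abs_sub ((∑ s ∈ Finset.range N, f s) - L)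
      ((∑ s ∈ Finset.range t₀, f s) - L)
    calc |(∑ s ∈ Finset.range N, f s) - ∑ s ∈ Finset.range t₀, f s|
        = |((∑ s ∈ Finset.range N, f s) - L) - ((∑ s ∈ Finset.range t₀, f s) - L)| := by ring_nf
      _ ≤ _ := abs_sub _ _
  linarith

/-- The master induction bound. -/
lemma ind_bound (ℓ β ψ γ : ℕ → ℝ) (P d : ℝ) (t₀ : ℕ)
    (hβ : ∀ t, 0 ≤ β t) (hψ : ∀ t, 0 ≤ ψ t)
    (hS : ∀ N, t₀ ≤ N → |∑ s ∈ Finset.Ico t₀ N, γ s| ≤ d)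
    (hstep : ∀ t, t₀ ≤ t → ℓ (t + 1) ≤ max (P + β t) (ℓ t + β t - ψ t + γ t)) :
    ∀ u, t₀ ≤ u →
      ℓ u ≤ max (P + 2 * d + (∑ s ∈ Finset.Ico t₀ u, β s) + (∑ s ∈ Finset.Ico t₀ u, γ s))
        (ℓ t₀ + (∑ s ∈ Finset.Ico t₀ u, β s) - (∑ s ∈ Finset.Ico t₀ u, ψ s)
          + (∑ s ∈ Finset.Ico t₀ u, γ s)) := by
  intro u hu
  induction u, hu using Nat.le_induction with
  | base => simp
  | succ u hu ih =>
    have hd0 : 0 ≤ d := (abs_nonneg _).trans (hS t₀ le_rfl)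
    have hβsum : 0 ≤ ∑ s ∈ Finset.Ico t₀ u, β s := Finset.sum_nonneg fun s _ => hβ s
    have hSu : -d ≤ ∑ s ∈ Finset.Ico t₀ (u + 1), γ s := neg_le_of_abs_le (hS _ (by omega))
    have hβs : ∑ s ∈ Finset.Ico t₀ (u + 1), β s = (∑ s ∈ Finset.Ico t₀ u, β s) + β u :=
      Finset.sum_Ico_succ_top hu _
    have hψs : ∑ s ∈ Finset.Ico t₀ (u + 1), ψ s = (∑ s ∈ Finset.Ico t₀ u, ψ s) + ψ u :=
      Finset.sum_Ico_succ_top hu _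
    have hγs : ∑ s ∈ Finset.Ico t₀ (u + 1), γ s = (∑ s ∈ Finset.Ico t₀ u, γ s) + γ u :=
      Finset.sum_Ico_succ_top hu _
    refine (hstep u hu).trans (max_le ?_ ?_)
    · refine le_max_of_le_left ?_
      rw [hβs, hγs]
      have := hψ u
      nlinarith [hSu, hβsum, hγs ▸ hSu]
    · rcases le_max_iff.1 ih with h | h
      · refine le_max_of_le_left ?_
        rw [hβs, hγs]
        have := hψ u
        linarith
      · refine le_max_of_le_right ?_
        rw [hβs, hγs, hψs]
        linarith

/-- Divergence of `∑ min (c t) δ`. -/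
lemma min_div (c : ℕ → ℝ) (δ : ℝ) (hδ : 0 < δ) (hc : ∀ t, 0 ≤ c t)
    (hdiv : Tendsto (fun N => ∑ t ∈ Finset.range N, c t) atTop atTop) :
    Tendsto (fun N => ∑ t ∈ Finset.range N, min (c t) δ) atTop atTop := by
  have hnonneg : ∀ t, 0 ≤ min (c t) δ := fun t => le_min (hc t) hδ.le
  rw [← not_summable_iff_tendsto_nat_atTop_of_nonneg hnonneg]
  intro hsum
  have hc_not : ¬ Summable c := (not_summable_iff_tendsto_nat_atTop_of_nonneg hc).2 hdiv
  apply hc_not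
  have h0 : Tendsto (fun t => min (c t) δ) atTop (nhds 0) := hsum.tendsto_atTop_zero
  have hev : ∀ᶠ t in atTop, c t = min (c t) δ := by
    filter_upwards [h0.eventually (eventually_lt_nhds hδ)] with t ht
    rcases le_total (c t) δ with h | h
    · simp [min_eq_left h]
    · exfalso; rw [min_eq_right h] at ht; exact lt_irrefl _ ht
  obtain ⟨T, hT⟩ := eventually_atTop.1 hev
  rw [← summable_nat_add_iff T]
  have : (fun t => c (t + T)) = fun t => min (c (t + T)) δ :=
    funext fun t => hT (t + T) (by omega)
  rw [this]
  exact (summable_nat_add_iff T).2 hsum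

lemma log_add_le {α p q : ℝ} (hα : 0 < α) (hp : α ≤ p) (hq : 0 ≤ q) :
    Real.log (p + q) ≤ Real.log p + q / α := by
  have hp0 : 0 < p := hα.trans_le hp
  have h1 : Real.log (p + q) - Real.log p = Real.log ((p + q) / p) := by
    rw [Real.log_div (by positivity) (ne_of_gt hp0)]
  have h2 : Real.log ((p + q) / p) ≤ (p + q) / p - 1 :=
    Real.log_le_sub_one_of_pos (by positivity)
  have h3 : (p + q) / p - 1 = q / p := by field_simp; ring
  have h4 : q / p ≤ q / α := by
    apply div_le_div_of_nonneg_left hq hα hp <;> try exact hp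
  linarith [h1 ▸ h2, h3 ▸ (h1 ▸ h2)]

lemma log_sub_le {D ψ α : ℝ} (hα : 0 < α) (hψ : 0 ≤ ψ) (hψD : α ≤ D - ψ) :
    Real.log (D - ψ) ≤ Real.log D - ψ / D := by
  have hD0 : 0 < D := by linarith
  have h1 : Real.log (D - ψ) - Real.log D = Real.log ((D - ψ) / D) := by
    rw [Real.log_div (by linarith) (ne_of_gt hD0)]
  have h2 : Real.log ((D - ψ) / D) ≤ (D - ψ) / D - 1 :=
    Real.log_le_sub_one_of_pos (div_pos (by linarith) hD0)
  have h3 : (D - ψ) / D - 1 = -(ψ / D) := by field_simp; ring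
  linarith [h1 ▸ h2, h3 ▸ (h1 ▸ h2)]

lemma log1p_bound {x : ℝ} (hx : |x| ≤ 1/2) : |Real.log (1 + x) - x| ≤ 2 * x ^ 2 := by
  have h := Real.abs_log_sub_add_sum_range_le (x := -x) (by rw [abs_neg]; linarith [abs_nonneg x, hx]) 1
  simp only [Finset.range_one, Finset.sum_singleton, pow_one, Nat.cast_one] at h
  rw [abs_neg] at h
  have h2 : 1 - -x = 1 + x := by ring
  have h3 : |x| ^ 2 / (1 - |x|) ≤ 2 * x ^ 2 := by
    have h4 : (1:ℝ)/2 ≤ 1 - |x| := by linarith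
    have h5 : |x| ^ 2 = x ^ 2 := sq_abs x
    rw [div_le_iff₀ (by linarith), h5]
    nlinarith [sq_nonneg x]
  have h6 : |(-x / 1) + Real.log (1 + x)| ≤ |x| ^ 2 / (1 - |x|) := by
    rw [← h2]; convert h using 3 <;> push_cast <;> ring
  have h7 : |Real.log (1 + x) - x| = |(-x / 1) + Real.log (1 + x)| := by
    rw [div_one]; congr 1; ring
  linarith [h7 ▸ (h6.trans h3)]


set_option maxHeartbeats 1000000 in
/-- The deterministic core of Dvoretzky's extension. -/
lemma det (v m g Y a b c h : ℕ → ℝ) (α θ : ℝ)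
    (hθ : 0 < θ) (hθα : 2 * θ ≤ α)
    (hm0 : ∀ t, 0 ≤ m t) (hY0 : ∀ t, 0 ≤ Y t) (hv0 : ∀ t, 0 ≤ v t)
    (hb0 : ∀ t, 0 ≤ b t) (hc0 : ∀ t, 0 ≤ c t) (hh0 : ∀ t, 0 ≤ h t)
    (hbs : Summable b) (hhs : Summable h) (hYs : Summable Y)
    (hcd : Tendsto (fun N => ∑ t ∈ Finset.range N, c t) atTop atTop)
    (ha : ∀ᶠ t in atTop, a t ≤ α)
    (hrec : ∀ t, v (t + 1) = m t + max (m t) θ * g t + Y t)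
    (hmb : ∀ t, m t ≤ max (a t) ((1 + b t) * v t - c t + h t))
    (hg : ∃ S, Tendsto (fun N => ∑ t ∈ Finset.range N, g t) atTop (nhds S))
    (hg2 : Summable (fun t => (g t) ^ 2)) :
    ∀ ε > 0, ∀ᶠ t in atTop, v t ≤ α + ε := by
  intro ε hε
  have hα : 0 < α := by linarith
  set u : ℕ → ℝ := fun t => max (v t) α with hu_def
  have huα : ∀ t, α ≤ u t := fun t => le_max_right _ _
  have hu0 : ∀ t, 0 < u t := fun t => hα.trans_le (huα t)
  have hvu : ∀ t, v t ≤ u t := fun t => le_max_left _ _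
  set ℓ : ℕ → ℝ := fun t => Real.log (u t) with hℓ_def
  set ψ : ℕ → ℝ := fun t => min (c t) ((1 + b t) * u t + h t - α) with hψ_def
  set ψt : ℕ → ℝ := fun t => ψ t / ((1 + b t) * u t + h t) with hψt_def
  set β : ℕ → ℝ := fun t => b t + h t / α + Y t / α with hβ_def
  set γ : ℕ → ℝ := fun t => Real.log (1 + g t) with hγ_def
  set P : ℝ := Real.log α with hP_def
  have hDpos : ∀ t, 0 < (1 + b t) * u t + h t := by
    intro t
    have h1 : u t ≤ (1 + b t) * u t := by nlinarith [hb0 t, hu0 t]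
    nlinarith [hu0 t, hh0 t]
  have hψ0 : ∀ t, 0 ≤ ψ t := by
    intro t
    refine le_min (hc0 t) ?_
    have h1 : u t ≤ (1 + b t) * u t := by nlinarith [hb0 t, hu0 t]
    have := huα t
    linarith [hh0 t]
  have hψt0 : ∀ t, 0 ≤ ψt t := fun t => div_nonneg (hψ0 t) (hDpos t).le
  have hβ0 : ∀ t, 0 ≤ β t := fun t => by
    have := hb0 t; have := hh0 t; have := hY0 t; positivity
  -- the one-step inequality
  have hstep : ∀ t, a t ≤ α → |g t| ≤ 1 / 2 →
      ℓ (t + 1) ≤ max (P + β t) (ℓ t + β t - ψt t + γ t) := by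
    intro t hat hgt
    have hg1 := abs_le.1 hgt
    have h1g : (0:ℝ) < 1 + g t := by linarith [hg1.1]
    set D : ℝ := (1 + b t) * u t + h t with hD
    have hDp : 0 < D := hDpos t
    have hψle : ψ t ≤ D - α := min_le_right _ _
    have hXge : α ≤ D - ψ t := by linarith
    have hXpos : 0 < D - ψ t := hα.trans_le hXge
    have hmX : m t ≤ D - ψ t := by
      rcases le_max_iff.1 (hmb t) with hcase | hcase
      · linarith
      · have h2 : (1 + b t) * v t ≤ (1 + b t) * u t := by
          have := hb0 t; nlinarith [hvu t]
        have h3 : ψ t ≤ c t := min_le_left _ _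
        linarith
    have hv1 : v (t + 1) ≤ max α ((D - ψ t) * (1 + g t)) + Y t := by
      rcases le_total θ (m t) with hmθ | hmθ
      · rw [hrec t, max_eq_left hmθ]
        have h4 : m t + m t * g t = m t * (1 + g t) := by ring
        have h5 : m t * (1 + g t) ≤ (D - ψ t) * (1 + g t) :=
          mul_le_mul_of_nonneg_right hmX h1g.le
        have h6 : (D - ψ t) * (1 + g t) ≤ max α ((D - ψ t) * (1 + g t)) := le_max_right _ _
        linarith
      · rw [hrec t, max_eq_right hmθ]
        have h4 : θ * g t ≤ θ * (1 / 2) := by nlinarith [hg1.2]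
        have h5 : α ≤ max α ((D - ψ t) * (1 + g t)) := le_max_left _ _
        linarith
    have hu1 : u (t + 1) ≤ max α ((D - ψ t) * (1 + g t)) + Y t := by
      refine max_le hv1 ?_
      have h5 : α ≤ max α ((D - ψ t) * (1 + g t)) := le_max_left _ _
      linarith [hY0 t]
    have hmaxpos : (0:ℝ) < max α ((D - ψ t) * (1 + g t)) := hα.trans_le (le_max_left _ _)
    have hℓ1 : ℓ (t + 1) ≤ Real.log (max α ((D - ψ t) * (1 + g t))) + Y t / α := by
      have l1 : Real.log (u (t + 1)) ≤ Real.log (max α ((D - ψ t) * (1 + g t)) + Y t) :=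
        Real.log_le_log (hu0 (t + 1)) hu1
      exact l1.trans (log_add_le hα (le_max_left _ _) (hY0 t))
    have hlogmax : Real.log (max α ((D - ψ t) * (1 + g t)))
        = max P (Real.log (D - ψ t) + γ t) := by
      have hprod : Real.log ((D - ψ t) * (1 + g t)) = Real.log (D - ψ t) + γ t :=
        Real.log_mul (ne_of_gt hXpos) (ne_of_gt h1g)
      rcases le_total α ((D - ψ t) * (1 + g t)) with hcase | hcase
      · have hle : P ≤ Real.log (D - ψ t) + γ t := by
          rw [← hprod]; exact Real.log_le_log hα hcase
        rw [max_eq_right hcase, hprod, max_eq_right hle]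
      · have hle : Real.log (D - ψ t) + γ t ≤ P := by
          rw [← hprod]; exact Real.log_le_log (by positivity) hcase
        rw [max_eq_left hcase, max_eq_left hle]
    have hlogX : Real.log (D - ψ t) ≤ ℓ t + (b t + h t / α) - ψt t := by
      have l1 : Real.log (D - ψ t) ≤ Real.log D - ψ t / D := log_sub_le hα (hψ0 t) hXge
      have l2 : Real.log D ≤ Real.log ((1 + b t) * u t) + h t / α := by
        have : α ≤ (1 + b t) * u t := by nlinarith [hb0 t, hu0 t, huα t]
        exact log_add_le hα this (hh0 t)
      have l3 : Real.log ((1 + b t) * u t) = Real.log (1 + b t) + Real.log (u t) :=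
        Real.log_mul (by linarith [hb0 t]) (ne_of_gt (hu0 t))
      have l4 : Real.log (1 + b t) ≤ b t := by
        have := Real.log_le_sub_one_of_pos (show (0:ℝ) < 1 + b t by linarith [hb0 t])
        linarith
      have : ψt t = ψ t / D := rfl
      simp only [hℓ_def]
      linarith
    rw [hlogmax] at hℓ1
    refine hℓ1.trans ?_
    rw [← max_add_add_right]
    refine max_le_max ?_ ?_
    · have := hb0 t; have := hh0 t
      have h7 : 0 ≤ h t / α := by positivity
      simp only [hβ_def]; linarith
    · simp only [hβ_def]; linarith
  -- convergence of γ partial sums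
  obtain ⟨Sg, hSg⟩ := hg
  have hgb : ∀ᶠ t in atTop, |g t| ≤ 1 / 2 := by
    have h0 : Tendsto (fun t => (g t) ^ 2) atTop (nhds 0) := hg2.tendsto_atTop_zero
    filter_upwards [h0.eventually (eventually_le_nhds (show (0:ℝ) < 1/4 by norm_num))] with t ht
    have : |g t| = Real.sqrt ((g t) ^ 2) := (Real.sqrt_sq_eq_abs _).symm
    rw [this]
    calc Real.sqrt ((g t) ^ 2) ≤ Real.sqrt (1 / 4) := Real.sqrt_le_sqrt ht
      _ = 1 / 2 := by
          rw [show (1:ℝ)/4 = (1/2)^2 by norm_num, Real.sqrt_sq (by norm_num)]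
  obtain ⟨T₁, hT₁⟩ := eventually_atTop.1 hgb
  have hr_sum : Summable (fun t => γ t - g t) := by
    rw [← summable_nat_add_iff T₁]
    refine Summable.of_abs ?_
    refine Summable.of_nonneg_of_le (fun t => abs_nonneg _)
      (fun t => ?_) (((summable_nat_add_iff T₁).2 hg2).mul_left 2)
    exact log1p_bound (hT₁ (t + T₁) (by omega))
  have hγconv : ∃ Lγ, Tendsto (fun N => ∑ s ∈ Finset.range N, γ s) atTop (nhds Lγ) := by
    refine ⟨(∑' t, (γ t - g t)) + Sg, ?_⟩
    have h1 := hr_sum.hasSum.tendsto_sum_nat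
    have h2 := h1.add hSg
    refine h2.congr fun N => ?_
    rw [← Finset.sum_add_distrib]
    exact Finset.sum_congr rfl fun s _ => by ring
  obtain ⟨Lγ, hLγ⟩ := hγconv
  have hβ_sum : Summable β := ((hbs.add (hhs.div_const α)).add (hYs.div_const α)).congr
    fun t => rfl
  -- pick d
  set d : ℝ := Real.log (1 + ε / α) / 6 with hd_def
  have hεα : (1:ℝ) < 1 + ε / α := by
    have : 0 < ε / α := by positivity
    linarith
  have hd : 0 < d := by
    have := Real.log_pos hεα
    positivity
  obtain ⟨Tγ, hTγ⟩ := cauchy_tail γ Lγ hLγ hd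
  obtain ⟨Tβ, hTβ⟩ := cauchy_tail β (∑' t, β t) hβ_sum.hasSum.tendsto_sum_nat hd
  obtain ⟨Ta, hTa⟩ := eventually_atTop.1 ha
  set T : ℕ := max (max Ta T₁) (max Tβ Tγ) with hT_def
  have hstepT : ∀ t, T ≤ t → ℓ (t + 1) ≤ max (P + β t) (ℓ t + β t - ψt t + γ t) := by
    intro t ht
    exact hstep t (hTa t (by omega)) (hT₁ t (by omega))
  have hβtail : ∀ t₀ N, T ≤ t₀ → t₀ ≤ N → ∑ s ∈ Finset.Ico t₀ N, β s ≤ d := by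
    intro t₀ N h1 h2
    exact (le_abs_self _).trans (hTβ t₀ N (by omega) h2)
  have hγtail : ∀ t₀ N, T ≤ t₀ → t₀ ≤ N → |∑ s ∈ Finset.Ico t₀ N, γ s| ≤ d := by
    intro t₀ N h1 h2
    exact hTγ t₀ N (by omega) h2
  have hIND : ∀ t₀, T ≤ t₀ → ∀ w, t₀ ≤ w →
      ℓ w ≤ max (P + 4 * d) (ℓ t₀ + 2 * d - ∑ s ∈ Finset.Ico t₀ w, ψt s) := by
    intro t₀ ht₀ w hw
    have hmain := ind_bound ℓ β ψt γ P d t₀ hβ0 hψt0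
      (fun N hN => hγtail t₀ N ht₀ hN)
      (fun t ht => hstepT t (ht₀.trans ht)) w hw
    refine hmain.trans (max_le_max ?_ ?_)
    · have h1 := hβtail t₀ w ht₀ hw
      have h2 : ∑ s ∈ Finset.Ico t₀ w, γ s ≤ d := (le_abs_self _).trans (hγtail t₀ w ht₀ hw)
      linarith
    · have h1 := hβtail t₀ w ht₀ hw
      have h2 : ∑ s ∈ Finset.Ico t₀ w, γ s ≤ d := (le_abs_self _).trans (hγtail t₀ w ht₀ hw)
      linarith
  -- boundedness
  set R : ℝ := max (P + 4 * d) (ℓ T + 2 * d) with hR_def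
  have hbound : ∀ t, T ≤ t → u t ≤ Real.exp R := by
    intro t ht
    have h1 := hIND T le_rfl t ht
    have h2 : ℓ t ≤ R := by
      refine h1.trans (max_le_max le_rfl ?_)
      have : 0 ≤ ∑ s ∈ Finset.Ico T t, ψt s := Finset.sum_nonneg fun s _ => hψt0 s
      linarith
    calc u t = Real.exp (ℓ t) := (Real.exp_log (hu0 t)).symm
      _ ≤ Real.exp R := Real.exp_le_exp.2 h2
  set Bd : ℝ := Real.exp R with hBd_def
  set δ₂ : ℝ := α * (Real.exp (4 * d) - 1) with hδ₂_def
  have hδ₂ : 0 < δ₂ := by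
    have : 1 < Real.exp (4 * d) := by rw [← Real.exp_zero]; exact Real.exp_lt_exp.2 (by linarith)
    have h2 : 0 < Real.exp (4 * d) - 1 := by linarith
    positivity
  set bS : ℝ := ∑' t, b t with hbS_def
  set hS : ℝ := ∑' t, h t with hhS_def
  have hble : ∀ t, b t ≤ bS := fun t => Summable.le_tsum hbs t fun j _ => hb0 j
  have hhle : ∀ t, h t ≤ hS := fun t => Summable.le_tsum hhs t fun j _ => hh0 j
  have hbS0 : 0 ≤ bS := tsum_nonneg hb0
  have hhS0 : 0 ≤ hS := tsum_nonneg hh0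
  set B₂ : ℝ := (1 + bS) * Bd + hS with hB₂_def
  have hBd0 : 0 < Bd := Real.exp_pos _
  have hB₂pos : 0 < B₂ := by positivity
  have hψtlow : ∀ t, T ≤ t → P + 4 * d < ℓ t → min (c t) δ₂ / B₂ ≤ ψt t := by
    intro t ht hℓt
    have hu_lb : α * Real.exp (4 * d) ≤ u t := by
      have h1 : Real.exp (P + 4 * d) ≤ Real.exp (ℓ t) := Real.exp_le_exp.2 hℓt.le
      rw [Real.exp_add, Real.exp_log hα] at h1
      rw [← Real.exp_log (hu0 t)]
      exact h1
    have hαδ : α + δ₂ = α * Real.exp (4 * d) := by rw [hδ₂_def]; ring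
    have hψlb : min (c t) δ₂ ≤ ψ t := by
      refine min_le_min le_rfl ?_
      have h2 : u t ≤ (1 + b t) * u t := by nlinarith [hb0 t, hu0 t]
      have h3 := hh0 t
      linarith [hu_lb, hαδ]
    have hDub : (1 + b t) * u t + h t ≤ B₂ := by
      have h4 : (1 + b t) * u t ≤ (1 + bS) * Bd := by
        have := hble t; have := hb0 t
        have h5 := hbound t ht
        nlinarith [hu0 t]
      have := hhle t
      simp only [hB₂_def]; linarith
    calc min (c t) δ₂ / B₂ ≤ ψ t / ((1 + b t) * u t + h t) :=
          div_le_div₀ (hψ0 t) hψlb (hDpos t) hDub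
      _ = ψt t := rfl
  -- Claim A: there is a time where ℓ dips below P + 4d
  have hA : ∃ t₁, T ≤ t₁ ∧ ℓ t₁ ≤ P + 4 * d := by
    by_contra hcon
    push_neg at hcon
    have hcon' : ∀ t, T ≤ t → P + 4 * d < ℓ t := fun t ht =>
      lt_of_not_ge fun hle => absurd (⟨ht, hle⟩ : T ≤ t ∧ ℓ t ≤ P + 4 * d) (by
        intro ⟨h1, h2⟩; exact (hcon t h1).not_ge h2)
    set q : ℕ → ℝ := fun s => min (c s) δ₂ / B₂ with hq_def
    have hqdiv : Tendsto (fun N => ∑ s ∈ Finset.range N, q s) atTop atTop := by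
      have h1 := min_div c δ₂ hδ₂ hc0 hcd
      have h2 := h1.atTop_div_const hB₂pos
      refine h2.congr fun N => ?_
      rw [← Finset.sum_div]
    have hIcoq : Tendsto (fun N => ∑ s ∈ Finset.Ico T N, q s) atTop atTop := by
      have h3 : Tendsto (fun N => (∑ s ∈ Finset.range N, q s) - ∑ s ∈ Finset.range T, q s)
          atTop atTop := tendsto_atTop_add_const_right _ _ hqdiv
      refine Tendsto.congr' ?_ h3
      filter_upwards [eventually_ge_atTop T] with N hN
      rw [Finset.sum_Ico_eq_sub _ hN]
    have hψIco : ∀ᶠ N in atTop, ℓ T + 2 * d - (P + 4 * d) ≤ ∑ s ∈ Finset.Ico T N, ψt s := by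
      have h4 : ∀ᶠ N in atTop, ℓ T + 2 * d - (P + 4 * d) ≤ ∑ s ∈ Finset.Ico T N, q s :=
        hIcoq.eventually_ge_atTop _
      filter_upwards [h4, eventually_ge_atTop T] with N hN hNT
      refine hN.trans (Finset.sum_le_sum fun s hs => ?_)
      have hs' := Finset.mem_Ico.1 hs
      exact hψtlow s hs'.1 (hcon' s hs'.1)
    obtain ⟨N, hN1, hN2⟩ := (hψIco.and (eventually_ge_atTop T)).exists
    have h5 := hIND T le_rfl N hN2
    have h6 : ℓ N ≤ P + 4 * d := by
      refine h5.trans (max_le le_rfl ?_)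
      linarith
    exact (hcon' N hN2).not_ge h6
  obtain ⟨t₁, ht₁T, ht₁⟩ := hA
  refine eventually_atTop.2 ⟨t₁, fun t ht => ?_⟩
  have h1 := hIND t₁ ht₁T t ht
  have h2 : ℓ t ≤ P + 6 * d := by
    refine h1.trans (max_le (by linarith) ?_)
    have : 0 ≤ ∑ s ∈ Finset.Ico t₁ t, ψt s := Finset.sum_nonneg fun s _ => hψt0 s
    linarith
  have h3 : u t ≤ α + ε := by
    have h4 : u t ≤ Real.exp (P + 6 * d) := by
      calc u t = Real.exp (ℓ t) := (Real.exp_log (hu0 t)).symm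
        _ ≤ _ := Real.exp_le_exp.2 h2
    have h5 : Real.exp (P + 6 * d) = α * (1 + ε / α) := by
      rw [Real.exp_add, Real.exp_log hα]
      congr 1
      rw [hd_def]
      rw [show 6 * (Real.log (1 + ε / α) / 6) = Real.log (1 + ε / α) by ring]
      exact Real.exp_log (by linarith)
    rw [h5] at h4
    have h6 : α * (1 + ε / α) = α + ε := by field_simp
    linarith [h6 ▸ h4]
  exact (hvu t).trans h3

end DvoAux


set_option maxHeartbeats 2000000 in
/-- Extension of Dvoretzky's theorem (Theorem 5.10). -/
theorem dvoretzky_extension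
    {Ω : Type*} {mΩ : MeasurableSpace Ω} {μ : Measure Ω} [IsProbabilityMeasure μ]
    {n : ℕ} (xstar : Fin n → ℝ)
    (x y : ℕ → Ω → Fin n → ℝ)
    (hx_meas : ∀ t, Measurable (x t)) (hy_meas : ∀ t, Measurable (y t))
    (T : (t : ℕ) → (Fin (t + 1) → Fin n → ℝ) → Fin n → ℝ)
    (hT_meas : ∀ t, Measurable (T t))
    (hrec : ∀ t ω, x (t + 1) ω = T t (fun i => x (i : ℕ) ω) + y t ω)
    (a b c h : ℕ → ℝ) (aInf : ℝ)
    (ha_nonneg : ∀ t, 0 ≤ a t) (hb_nonneg : ∀ t, 0 ≤ b t)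
    (hc_nonneg : ∀ t, 0 ≤ c t) (hh_nonneg : ∀ t, 0 ≤ h t)
    (ha_lim : Tendsto a atTop (nhds aInf))
    (hb_sum : Summable b)
    (hc_div : Tendsto (fun N => ∑ t ∈ Finset.range N, c t) atTop atTop)
    (hh_sum : Summable h)
    (hT_bound : ∀ t (z : Fin (t + 1) → Fin n → ℝ),
      (∑ k, (T t z k - xstar k) ^ 2)
        ≤ max (a t)
            ((1 + b t) * (∑ k, (z (Fin.last t) k - xstar k) ^ 2) - c t + h t))
    (hx0_int : Integrable (fun ω => ∑ k, (x 0 ω k) ^ 2) μ)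
    (hy_int : ∀ t, Integrable (fun ω => ∑ k, (y t ω k) ^ 2) μ)
    (hy_sum : Summable fun t => ∫ ω, ∑ k, (y t ω k) ^ 2 ∂μ)
    (hy_cond : ∀ t k,
      (μ[fun ω => y t ω k|
        MeasurableSpace.comap (fun ω => fun i : Fin (t + 1) => x (i : ℕ) ω)
          inferInstance]) =ᵐ[μ] 0) :
    ∀ᵐ ω ∂μ,
      Filter.limsup (fun t => ∑ k, (x t ω k - xstar k) ^ 2) atTop ≤ aInf := by
  classical
  -- the process of histories and the filtration it generates
  set X : (t : ℕ) → Ω → (Fin (t + 1) → Fin n → ℝ) := fun t ω i => x (i : ℕ) ω with hX_def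
  have hXm : ∀ t, Measurable (X t) := fun t =>
    measurable_pi_lambda (fun ω (i : Fin (t + 1)) => x (i : ℕ) ω) (fun i => hx_meas (i : ℕ))
  let ℱ : Filtration ℕ mΩ :=
  { seq := fun t => MeasurableSpace.comap (X t) inferInstance
    mono' := by
      intro s t hst
      have hπ : Measurable (fun (z : Fin (t + 1) → Fin n → ℝ) (i : Fin (s + 1)) =>
          z (Fin.castLE (by omega) i)) :=
        measurable_pi_lambda _ fun i => measurable_pi_apply _
      have heq : X s = (fun (z : Fin (t + 1) → Fin n → ℝ) (i : Fin (s + 1)) =>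
          z (Fin.castLE (by omega) i)) ∘ X t := rfl
      show MeasurableSpace.comap (X s) inferInstance ≤ MeasurableSpace.comap (X t) inferInstance
      rw [heq, ← MeasurableSpace.comap_comp]
      exact MeasurableSpace.comap_mono hπ.comap_le
    le' := fun t => (hXm t).comap_le }
  have hℱ : ∀ t, ℱ t = MeasurableSpace.comap (X t) inferInstance := fun t => rfl
  have hXcm : ∀ t, Measurable[ℱ t] (X t) := fun t => measurable_iff_comap_le.2 le_rfl
  -- the key a.s. eventual bound
  have haInf0 : 0 ≤ aInf := ge_of_tendsto ha_lim (Eventually.of_forall ha_nonneg)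
  have key : ∀ ε : ℝ, 0 < ε → ∀ᵐ ω ∂μ,
      ∀ᶠ t in atTop, (∑ k, (x t ω k - xstar k) ^ 2) ≤ aInf + ε := by
    intro ε hε
    set α : ℝ := aInf + ε / 2 with hα_def
    have hα : 0 < α := by positivity
    set θ : ℝ := α / 2 with hθ_def
    have hθpos : 0 < θ := by positivity
    -- pointwise quantities
    set M : ℕ → Ω → ℝ := fun t ω => ∑ k, (T t (X t ω) k - xstar k) ^ 2 with hM_def
    set Y : ℕ → Ω → ℝ := fun t ω => ∑ k, (y t ω k) ^ 2 with hY_def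
    set C : ℕ → Ω → ℝ := fun t ω => ∑ k, (2 * (T t (X t ω) k - xstar k)) * y t ω k with hC_def
    set w : ℕ → Ω → ℝ := fun t ω => max (M t ω) θ with hw_def
    set g : ℕ → Ω → ℝ := fun t ω => C t ω / w t ω with hg_def
    set G : ℕ → Ω → ℝ := fun N ω => ∑ t ∈ Finset.range N, g t ω with hG_def
    -- basic positivity
    have hMnn : ∀ t ω, 0 ≤ M t ω := fun t ω => Finset.sum_nonneg fun k _ => sq_nonneg _
    have hYnn : ∀ t ω, 0 ≤ Y t ω := fun t ω => Finset.sum_nonneg fun k _ => sq_nonneg _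
    have hwpos : ∀ t ω, 0 < w t ω := fun t ω => lt_of_lt_of_le hθpos (le_max_right _ _)
    -- measurability
    have hTXm : ∀ t, Measurable (fun ω => T t (X t ω)) := fun t => (hT_meas t).comp (hXm t)
    have hMm : ∀ t, Measurable (M t) := fun t =>
      Finset.measurable_sum _ fun k _ =>
        (((measurable_pi_apply k).comp (hTXm t)).sub measurable_const).pow_const 2
    have hYmm : ∀ t, Measurable (Y t) := fun t =>
      Finset.measurable_sum _ fun k _ =>
        ((measurable_pi_apply k).comp (hy_meas t)).pow_const 2
    have hCm : ∀ t, Measurable (C t) := fun t =>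
      Finset.measurable_sum _ fun k _ =>
        ((((measurable_pi_apply k).comp (hTXm t)).sub measurable_const).const_mul 2).mul
          ((measurable_pi_apply k).comp (hy_meas t))
    have hwm : ∀ t, Measurable (w t) := fun t => (hMm t).max measurable_const
    have hgm : ∀ t, Measurable (g t) := fun t => (hCm t).div (hwm t)
    have hGm : ∀ N, Measurable (G N) := fun N =>
      Finset.measurable_sum _ fun t _ => hgm t
    -- integrability of coordinates of y
    have hyk_int : ∀ t k, Integrable (fun ω => y t ω k) μ := by
      intro t k
      refine ((integrable_const 1).add (hy_int t)).mono'
        ((measurable_pi_apply k).comp (hy_meas t)).aestronglyMeasurable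
        (Eventually.of_forall fun ω => ?_)
      simp only [Pi.add_apply]
      have h1 : (y t ω k) ^ 2 ≤ ∑ j, (y t ω j) ^ 2 :=
        Finset.single_le_sum (f := fun j => (y t ω j) ^ 2) (fun j _ => sq_nonneg _)
          (Finset.mem_univ k)
      rw [Real.norm_eq_abs]
      nlinarith [sq_nonneg (|y t ω k| - 1), sq_abs (y t ω k), abs_nonneg (y t ω k)]
    -- Cauchy-Schwarz bound
    have hCS : ∀ t ω, (C t ω) ^ 2 ≤ 4 * M t ω * Y t ω := by
      intro t ω
      have h1 := Finset.sum_mul_sq_le_sq_mul_sq Finset.univ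
        (fun k => 2 * (T t (X t ω) k - xstar k)) (fun k => y t ω k)
      have h2 : ∑ k, (2 * (T t (X t ω) k - xstar k)) ^ 2 = 4 * M t ω := by
        rw [hM_def, Finset.mul_sum]
        exact Finset.sum_congr rfl fun k _ => by ring
      calc (C t ω) ^ 2 ≤ (∑ k, (2 * (T t (X t ω) k - xstar k)) ^ 2) * (∑ k, (y t ω k) ^ 2) :=
            h1
        _ = 4 * M t ω * Y t ω := by rw [h2]
    have hMθw : ∀ t ω, M t ω * θ ≤ (w t ω) ^ 2 := by
      intro t ω
      rcases le_total (M t ω) θ with hc | hc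
      · have : w t ω = θ := max_eq_right hc
        rw [this]; nlinarith
      · have : w t ω = M t ω := max_eq_left hc
        rw [this]; nlinarith [hMnn t ω]
    have hgsq : ∀ t ω, (g t ω) ^ 2 ≤ 4 / θ * Y t ω := by
      intro t ω
      have hw2 : (0:ℝ) < (w t ω) ^ 2 := pow_pos (hwpos t ω) 2
      rw [hg_def]
      show (C t ω / w t ω) ^ 2 ≤ 4 / θ * Y t ω
      rw [div_pow, div_le_iff₀ hw2]
      have h1 := hCS t ω
      have h2 := hMθw t ω
      have h3 := hYnn t ω
      have h4 : 4 / θ * Y t ω * (w t ω)^2 ≥ 4 / θ * Y t ω * (M t ω * θ) := by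
        apply mul_le_mul_of_nonneg_left h2
        positivity
      have h5 : 4 / θ * Y t ω * (M t ω * θ) = 4 * M t ω * Y t ω := by
        field_simp
      linarith
    -- integrability of g and g^2
    have hYint : ∀ t, Integrable (Y t) μ := fun t => hy_int t
    have hg2_int : ∀ t, Integrable (fun ω => (g t ω) ^ 2) μ := by
      intro t
      refine ((hYint t).const_mul (4 / θ)).mono'
        ((hgm t).pow_const 2).aestronglyMeasurable (Eventually.of_forall fun ω => ?_)
      rw [Real.norm_eq_abs, abs_of_nonneg (sq_nonneg _)]
      exact hgsq t ω
    have hg_int : ∀ t, Integrable (g t) μ := by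
      intro t
      refine ((integrable_const 1).add (hg2_int t)).mono'
        (hgm t).aestronglyMeasurable (Eventually.of_forall fun ω => ?_)
      simp only [Pi.add_apply]
      rw [Real.norm_eq_abs]
      nlinarith [sq_nonneg (|g t ω| - 1), sq_abs (g t ω), abs_nonneg (g t ω)]
    -- conditional expectation of g vanishes
    have hcond : ∀ t, μ[g t|ℱ t] =ᵐ[μ] 0 := by
      intro t
      set φ : Fin n → Ω → ℝ := fun k ω => 2 * (T t (X t ω) k - xstar k) / w t ω with hφ_def
      have hφ_cm : ∀ k, Measurable[ℱ t] (φ k) := by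
        intro k
        have hTX_cm : Measurable[ℱ t] (fun ω => T t (X t ω)) := (hT_meas t).comp (hXcm t)
        have hM_cm : Measurable[ℱ t] (M t) :=
          Finset.measurable_sum _ fun k _ =>
            (((measurable_pi_apply k).comp hTX_cm).sub measurable_const).pow_const 2
        exact ((((measurable_pi_apply k).comp hTX_cm).sub measurable_const).const_mul 2).div
          (hM_cm.max measurable_const)
      have hφ_bdd : ∀ k ω, ‖φ k ω‖ ≤ 2 / Real.sqrt θ := by
        intro k ω
        have hA2 : (T t (X t ω) k - xstar k) ^ 2 ≤ M t ω :=
          Finset.single_le_sum (f := fun j => (T t (X t ω) j - xstar j) ^ 2)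
            (fun j _ => sq_nonneg _) (Finset.mem_univ k)
        have hsqθ : 0 < Real.sqrt θ := Real.sqrt_pos.2 hθpos
        have h1 : (T t (X t ω) k - xstar k) ^ 2 * θ ≤ (w t ω) ^ 2 :=
          le_trans (mul_le_mul_of_nonneg_right hA2 hθpos.le) (hMθw t ω)
        have h2 : |T t (X t ω) k - xstar k| * Real.sqrt θ ≤ w t ω := by
          have e1 : |T t (X t ω) k - xstar k| * Real.sqrt θ
              = Real.sqrt ((T t (X t ω) k - xstar k) ^ 2 * θ) := by
            rw [Real.sqrt_mul (sq_nonneg _), Real.sqrt_sq_eq_abs]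
          rw [e1]
          calc Real.sqrt ((T t (X t ω) k - xstar k) ^ 2 * θ) ≤ Real.sqrt ((w t ω) ^ 2) :=
                Real.sqrt_le_sqrt h1
            _ = w t ω := Real.sqrt_sq (hwpos t ω).le
        rw [hφ_def]
        show ‖2 * (T t (X t ω) k - xstar k) / w t ω‖ ≤ 2 / Real.sqrt θ
        rw [Real.norm_eq_abs, abs_div, abs_of_pos (hwpos t ω), abs_mul, abs_two]
        rw [div_le_div_iff₀ (hwpos t ω) hsqθ]
        nlinarith [abs_nonneg (T t (X t ω) k - xstar k)]
      have hφy_int : ∀ k : Fin n, Integrable (fun ω => φ k ω * y t ω k) μ := by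
        intro k
        exact (hyk_int t k).bdd_mul
          (((hφ_cm k).mono (ℱ.le t) le_rfl).aestronglyMeasurable)
          (Eventually.of_forall (hφ_bdd k))
      have hsplit : g t = ∑ k : Fin n, (fun ω => φ k ω * y t ω k) := by
        funext ω
        rw [Finset.sum_apply]
        show C t ω / w t ω = _
        rw [hC_def, Finset.sum_div]
        exact Finset.sum_congr rfl fun k _ => by ring
      rw [hsplit]
      have h1 := condExp_finsetSum (μ := μ) (m := ℱ t)
        (f := fun (k : Fin n) => fun ω => φ k ω * y t ω k) (s := Finset.univ)
        (fun k _ => hφy_int k)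
      refine h1.trans ?_
      have h2 : ∀ k : Fin n, μ[(fun ω => φ k ω * y t ω k)|ℱ t] =ᵐ[μ] 0 := by
        intro k
        have h3 := condExp_stronglyMeasurable_mul_of_bound (ℱ.le t)
          ((hφ_cm k).stronglyMeasurable) (hyk_int t k) (2 / Real.sqrt θ)
          (Eventually.of_forall (hφ_bdd k))
        refine EventuallyEq.trans (by exact h3) ?_
        have h4 : μ[(fun ω => y t ω k)|ℱ t] =ᵐ[μ] 0 := hy_cond t k
        filter_upwards [h4] with ω hω
        show φ k ω * (μ[(fun ω => y t ω k)|ℱ t]) ω = 0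
        rw [hω]
        simp
      filter_upwards [ae_all_iff.2 h2] with ω hω
      rw [Finset.sum_apply]
      show (∑ k : Fin n, (μ[(fun ω => φ k ω * y t ω k)|ℱ t]) ω) = 0
      calc (∑ k : Fin n, (μ[(fun ω => φ k ω * y t ω k)|ℱ t]) ω)
          = ∑ k : Fin n, (0:Ω → ℝ) ω := Finset.sum_congr rfl fun k _ => hω k
        _ = 0 := by simp
    -- g t is measurable with respect to ℱ (t+1)
    have hg_cm1 : ∀ t, Measurable[ℱ (t + 1)] (g t) := by
      intro t
      set π : (Fin (t + 2) → Fin n → ℝ) → (Fin (t + 1) → Fin n → ℝ) :=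
        fun z i => z (Fin.castLE (by omega) i) with hπ_def
      have hπm : Measurable π := measurable_pi_lambda _ fun i => measurable_pi_apply _
      set F : (Fin (t + 2) → Fin n → ℝ) → ℝ := fun z =>
        (∑ k, (2 * (T t (π z) k - xstar k)) * (z (Fin.last (t + 1)) k - T t (π z) k)) /
          max (∑ k, (T t (π z) k - xstar k) ^ 2) θ with hF_def
      have hTzm : Measurable (fun z => T t (π z)) := (hT_meas t).comp hπm
      have hFm : Measurable F := by
        refine Measurable.div ?_ ?_
        · refine Finset.measurable_sum _ fun k _ => ?_
          exact ((((measurable_pi_apply k).comp hTzm).sub measurable_const).const_mul 2).mul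
            (((measurable_pi_apply k).comp (measurable_pi_apply (Fin.last (t + 1)))).sub
              ((measurable_pi_apply k).comp hTzm))
        · exact (Finset.measurable_sum _ fun k _ =>
            (((measurable_pi_apply k).comp hTzm).sub measurable_const).pow_const 2).max
            measurable_const
      have hgeq : g t = F ∘ X (t + 1) := by
        funext ω
        have hπX : π (X (t + 1) ω) = X t ω := rfl
        show C t ω / w t ω = F (X (t + 1) ω)
        rw [hF_def]
        show C t ω / w t ω =
          (∑ k, (2 * (T t (π (X (t+1) ω)) k - xstar k)) *
            ((X (t+1) ω) (Fin.last (t + 1)) k - T t (π (X (t+1) ω)) k)) /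
          max (∑ k, (T t (π (X (t+1) ω)) k - xstar k) ^ 2) θ
        rw [hπX]
        have hxlast : (X (t + 1) ω) (Fin.last (t + 1)) = x (t + 1) ω := rfl
        rw [hxlast]
        have hy_eq : ∀ k, x (t + 1) ω k - T t (X t ω) k = y t ω k := by
          intro k
          have h5 := congrFun (hrec t ω) k
          have h6 : T t (fun i : Fin (t + 1) => x (i : ℕ) ω) k = T t (X t ω) k := rfl
          rw [Pi.add_apply, h6] at h5
          linarith
        have hnum : (∑ k, (2 * (T t (X t ω) k - xstar k)) *
            (x (t + 1) ω k - T t (X t ω) k)) = C t ω := by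
          rw [hC_def]
          exact Finset.sum_congr rfl fun k _ => by rw [hy_eq k]
        rw [hnum]
      rw [hgeq]
      exact hFm.comp (hXcm (t + 1))
    -- the martingale
    have hGadp : StronglyAdapted ℱ G := by
      intro N
      apply Measurable.stronglyMeasurable
      apply Finset.measurable_sum
      intro t ht
      have h1 : t + 1 ≤ N := Nat.succ_le_of_lt (Finset.mem_range.1 ht)
      exact (hg_cm1 t).mono (ℱ.mono h1) le_rfl
    have hGint : ∀ N, Integrable (G N) μ := fun N =>
      integrable_finset_sum _ fun t _ => hg_int t
    have hGsucc : ∀ N, G (N + 1) = G N + g N := by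
      intro N
      funext ω
      show (∑ t ∈ Finset.range (N + 1), g t ω) = (∑ t ∈ Finset.range N, g t ω) + g N ω
      rw [Finset.sum_range_succ]
    have hMart : Martingale G ℱ μ := by
      refine martingale_nat hGadp hGint fun N => ?_
      rw [hGsucc N]
      have h1 : μ[G N + g N|ℱ N] =ᵐ[μ] μ[G N|ℱ N] + μ[g N|ℱ N] :=
        condExp_add (hGint N) (hg_int N) _
      have h2 : μ[G N|ℱ N] = G N :=
        condExp_of_stronglyMeasurable (ℱ.le N) (hGadp N) (hGint N)
      filter_upwards [h1, hcond N] with ω hω1 hω2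
      rw [hω1, Pi.add_apply, h2, hω2]
      simp
    -- second moments bound
    set SY : ℝ := ∑' t, ∫ ω, Y t ω ∂μ with hSY_def
    have hYint_nn : ∀ t, 0 ≤ ∫ ω, Y t ω ∂μ := fun t =>
      integral_nonneg fun ω => hYnn t ω
    have hSY_nn : 0 ≤ SY := tsum_nonneg hYint_nn
    have hKmain : ∀ N, Integrable (fun ω => (G N ω) ^ 2) μ ∧
        ∫ ω, (G N ω) ^ 2 ∂μ ≤ 4 / θ * ∑ t ∈ Finset.range N, ∫ ω, Y t ω ∂μ := by
      intro N
      induction N with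
      | zero =>
        have h0 : (fun ω => (G 0 ω) ^ 2) = fun _ => (0:ℝ) := by
          funext ω
          show (∑ t ∈ Finset.range 0, g t ω) ^ 2 = 0
          simp
        rw [h0]
        refine ⟨integrable_const 0, ?_⟩
        simp
      | succ N ih =>
        have hGg_int : Integrable (fun ω => G N ω * g N ω) μ := by
          refine ((ih.1.add (hg2_int N)).const_mul (1/2)).mono'
            ((hGm N).mul (hgm N)).aestronglyMeasurable (Eventually.of_forall fun ω => ?_)
          simp only [Pi.add_apply]
          rw [Real.norm_eq_abs]
          have := abs_mul (G N ω) (g N ω)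
          nlinarith [sq_nonneg (|G N ω| - |g N ω|), sq_abs (G N ω), sq_abs (g N ω),
            abs_nonneg (G N ω), abs_nonneg (g N ω)]
        have hG1 : (fun ω => (G (N + 1) ω) ^ 2)
            = fun ω => (G N ω) ^ 2 + 2 * (G N ω * g N ω) + (g N ω) ^ 2 := by
          funext ω
          rw [hGsucc N, Pi.add_apply]
          ring
        have hint1 : Integrable (fun ω => (G N ω) ^ 2 + 2 * (G N ω * g N ω)) μ :=
          ih.1.add (hGg_int.const_mul 2)
        have hint2 : Integrable (fun ω => (G N ω) ^ 2 + 2 * (G N ω * g N ω) + (g N ω) ^ 2) μ :=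
          hint1.add (hg2_int N)
        constructor
        · rw [hG1]; exact hint2
        · have hcross : ∫ ω, G N ω * g N ω ∂μ = 0 := by
            have e0 : μ[(fun ω => G N ω * g N ω)|ℱ N]
                =ᵐ[μ] fun ω => G N ω * (μ[g N|ℱ N]) ω := by
              have := condExp_mul_of_stronglyMeasurable_left (hGadp N)
                (show Integrable (G N * g N) μ from hGg_int) (hg_int N)
              exact this
            calc ∫ ω, G N ω * g N ω ∂μ = ∫ ω, (μ[(fun ω => G N ω * g N ω)|ℱ N]) ω ∂μ :=
                  (integral_condExp (ℱ.le N)).symm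
              _ = ∫ ω, G N ω * (μ[g N|ℱ N]) ω ∂μ := integral_congr_ae e0
              _ = 0 := by
                  have e1 : (fun ω => G N ω * (μ[g N|ℱ N]) ω) =ᵐ[μ] fun _ => (0:ℝ) := by
                    filter_upwards [hcond N] with ω hω
                    rw [hω]
                    simp
                  rw [integral_congr_ae e1, integral_zero]
          have hgN2b : ∫ ω, (g N ω) ^ 2 ∂μ ≤ 4 / θ * ∫ ω, Y N ω ∂μ := by
            have h6 := integral_mono (hg2_int N) ((hYint N).const_mul (4/θ))
              (fun ω => hgsq N ω)
            rwa [integral_const_mul] at h6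
          have e2 : ∫ ω, (G (N+1) ω) ^ 2 ∂μ
              = ∫ ω, (G N ω) ^ 2 ∂μ + 2 * ∫ ω, G N ω * g N ω ∂μ + ∫ ω, (g N ω) ^ 2 ∂μ := by
            rw [hG1, integral_add hint1 (hg2_int N), integral_add ih.1 (hGg_int.const_mul 2),
              integral_const_mul]
          rw [e2, hcross, Finset.sum_range_succ, mul_add]
          have := ih.2
          linarith
    have hKbound : ∀ N, ∫ ω, (G N ω) ^ 2 ∂μ ≤ 4 / θ * SY := by
      intro N
      refine (hKmain N).2.trans ?_
      have h7 : ∑ t ∈ Finset.range N, ∫ ω, Y t ω ∂μ ≤ SY :=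
        Summable.sum_le_tsum _ (fun t _ => hYint_nn t) hy_sum
      have h8 : (0:ℝ) ≤ 4 / θ := by positivity
      nlinarith
    -- L¹ boundedness and martingale convergence
    set K : ℝ := 4 / θ * SY with hK_def
    have hKnn : 0 ≤ K := by positivity
    have hbdd : ∀ N, eLpNorm (G N) 1 μ ≤ ((1 + K).toNNReal : ℝ≥0∞) := by
      intro N
      rw [eLpNorm_one_eq_lintegral_enorm]
      have h1 : ∀ ω, (‖G N ω‖₊ : ℝ≥0∞) ≤ ENNReal.ofReal (1 + (G N ω) ^ 2) := by
        intro ω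
        rw [← ENNReal.ofReal_coe_nnreal]
        apply ENNReal.ofReal_le_ofReal
        simp only [coe_nnnorm, Real.norm_eq_abs]
        nlinarith [sq_nonneg (|G N ω| - 1), sq_abs (G N ω), abs_nonneg (G N ω)]
      have h2 : ENNReal.ofReal (1 + K) = ((1 + K).toNNReal : ℝ≥0∞) := rfl
      rw [← h2]
      calc ∫⁻ ω, (‖G N ω‖₊ : ℝ≥0∞) ∂μ ≤ ∫⁻ ω, ENNReal.ofReal (1 + (G N ω) ^ 2) ∂μ :=
            lintegral_mono h1
        _ = ENNReal.ofReal (∫ ω, (1 + (G N ω) ^ 2) ∂μ) :=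
            (ofReal_integral_eq_lintegral_ofReal ((integrable_const 1).add (hKmain N).1)
              (Eventually.of_forall fun ω => by positivity :
                0 ≤ᵐ[μ] fun ω => 1 + (G N ω) ^ 2)).symm
        _ ≤ ENNReal.ofReal (1 + K) := by
            apply ENNReal.ofReal_le_ofReal
            rw [integral_add (integrable_const 1) (hKmain N).1]
            simp only [integral_const, measure_univ, probReal_univ, ENNReal.toReal_one, smul_eq_mul, one_mul]
            linarith [hKbound N]
    have hGconv := hMart.submartingale.ae_tendsto_limitProcess hbdd
    -- a.s. summability of Y
    have hYae : ∀ᵐ ω ∂μ, Summable (fun t => Y t ω) := by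
      have h1 : ∫⁻ ω, (∑' t, ENNReal.ofReal (Y t ω)) ∂μ
          = ∑' t, ∫⁻ ω, ENNReal.ofReal (Y t ω) ∂μ :=
        lintegral_tsum fun t => ((hYmm t).ennreal_ofReal).aemeasurable
      have h2 : ∀ t, ∫⁻ ω, ENNReal.ofReal (Y t ω) ∂μ = ENNReal.ofReal (∫ ω, Y t ω ∂μ) :=
        fun t => (ofReal_integral_eq_lintegral_ofReal (hYint t)
          (Eventually.of_forall fun ω => hYnn t ω)).symm
      have h3 : (∑' t, ENNReal.ofReal (∫ ω, Y t ω ∂μ)) ≠ ⊤ := by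
        rw [← ENNReal.ofReal_tsum_of_nonneg hYint_nn hy_sum]
        exact ENNReal.ofReal_ne_top
      have h4 : ∀ᵐ ω ∂μ, (∑' t, ENNReal.ofReal (Y t ω)) < ⊤ := by
        refine ae_lt_top (by exact Measurable.ennreal_tsum fun t => (hYmm t).ennreal_ofReal) ?_
        rw [h1]
        simp only [h2]
        exact h3
      filter_upwards [h4] with ω hω
      have h5 := ENNReal.summable_toReal hω.ne
      refine h5.congr fun t => ?_
      rw [ENNReal.toReal_ofReal (hYnn t ω)]
    -- pointwise application of the deterministic lemma
    filter_upwards [hGconv, hYae] with ω hω1 hω2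
    have happ := DvoAux.det (fun t => ∑ k, (x t ω k - xstar k) ^ 2)
      (fun t => M t ω) (fun t => g t ω) (fun t => Y t ω) a b c h α θ
      hθpos (by rw [hθ_def]; ring_nf; exact le_rfl)
      (fun t => hMnn t ω) (fun t => hYnn t ω)
      (fun t => Finset.sum_nonneg fun k _ => sq_nonneg _)
      hb_nonneg hc_nonneg hh_nonneg hb_sum hh_sum hω2 hc_div
      (ha_lim.eventually (eventually_le_nhds (show aInf < α by rw [hα_def]; linarith)))
      ?_ ?_ ⟨_, hω1⟩ ?_ (ε/2) (by positivity)
    · refine happ.mono fun t ht => ?_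
      rw [hα_def] at ht
      linarith
    · -- the recursion
      intro t
      have h1 : max (M t ω) θ * g t ω = C t ω := by
        rw [hg_def]
        show max (M t ω) θ * (C t ω / w t ω) = C t ω
        rw [hw_def]
        rw [mul_comm, div_mul_cancel₀]
        exact ne_of_gt (hwpos t ω)
      show (∑ k, (x (t+1) ω k - xstar k) ^ 2) = M t ω + max (M t ω) θ * g t ω + Y t ω
      rw [h1]
      have h3 : ∀ k, x (t + 1) ω k = T t (X t ω) k + y t ω k := by
        intro k
        have h5 := congrFun (hrec t ω) k
        have h6 : T t (fun i : Fin (t + 1) => x (i : ℕ) ω) k = T t (X t ω) k := rfl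
        rw [Pi.add_apply, h6] at h5
        exact h5
      have h4 : ∀ k, (x (t+1) ω k - xstar k) ^ 2
          = (T t (X t ω) k - xstar k) ^ 2
            + ((2 * (T t (X t ω) k - xstar k)) * y t ω k + (y t ω k) ^ 2) := by
        intro k
        rw [h3 k]
        ring
      calc (∑ k, (x (t+1) ω k - xstar k) ^ 2)
          = ∑ k, ((T t (X t ω) k - xstar k) ^ 2
            + ((2 * (T t (X t ω) k - xstar k)) * y t ω k + (y t ω k) ^ 2)) :=
            Finset.sum_congr rfl fun k _ => h4 k
        _ = M t ω + C t ω + Y t ω := by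
            rw [Finset.sum_add_distrib, Finset.sum_add_distrib]
            rw [hM_def, hC_def, hY_def]
            ring
    · -- the bound on M
      intro t
      exact hT_bound t (X t ω)
    · -- summability of g^2
      exact Summable.of_nonneg_of_le (fun t => sq_nonneg _) (fun t => hgsq t ω)
        (hω2.mul_left (4/θ))
  -- conclude the limsup bound
  have H : ∀ᵐ ω ∂μ, ∀ m : ℕ,
      ∀ᶠ t in atTop, (∑ k, (x t ω k - xstar k) ^ 2) ≤ aInf + 1 / (m + 1) := by
    rw [ae_all_iff]
    intro m
    exact key (1 / (m + 1)) (by positivity)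
  filter_upwards [H] with ω hω
  have hcob : IsCoboundedUnder (· ≤ ·) atTop (fun t => ∑ k, (x t ω k - xstar k) ^ 2) := by
    exact isCoboundedUnder_le_of_le atTop (x := 0)
      fun t => Finset.sum_nonneg fun k _ => sq_nonneg _
  have hlim : ∀ m : ℕ,
      Filter.limsup (fun t => ∑ k, (x t ω k - xstar k) ^ 2) atTop ≤ aInf + 1 / (m + 1) :=
    fun m => Filter.limsup_le_of_le hcob (hω m)
  by_contra hcon
  push_neg at hcon
  obtain ⟨m, hm⟩ := exists_nat_one_div_lt (show (0:ℝ) <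
    Filter.limsup (fun t => ∑ k, (x t ω k - xstar k) ^ 2) atTop - aInf by linarith)
  have := hlim m
  have hm' : (1:ℝ) / (m + 1) <
      Filter.limsup (fun t => ∑ k, (x t ω k - xstar k) ^ 2) atTop - aInf := hm
  linarith
end

section
/- Convex but not aiming (counterexample, Appendix B): Define f : ℝ² → ℝ by f(x) = (1/2)(x₁ − 2x₂)² (i.e., f(x) = (1/2) xᵀAx with A = [[1, −2], [−2, 4]], which is positive semidefinite). Then f is convex on ℝ² and attains its minimum at x* = (0,0); yet at the point x = (3/2, 1) one has ∇f(x) = (−1/2, 1) and x₁·sign(∂f/∂x₁(x)) + x₂·sign(∂f/∂x₂(x)) = −1/2 < 0, so the coordinate-wise sign-aiming condition ⟨x − x*, sign(∇f(x))⟩ ≥ 0 fails at x. -/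
open InnerProductSpace

noncomputable def Lmap : EuclideanSpace ℝ (Fin 2) →L[ℝ] ℝ :=
  EuclideanSpace.proj (0 : Fin 2) - 2 • EuclideanSpace.proj (1 : Fin 2)

lemma Lmap_apply (x : EuclideanSpace ℝ (Fin 2)) : Lmap x = x 0 - 2 * x 1 := by
  simp [Lmap, two_mul]

noncomputable def gvec : EuclideanSpace ℝ (Fin 2) := !₂[-(1/2), 1]

lemma key (f : EuclideanSpace ℝ (Fin 2) → ℝ)
    (hf : ∀ x, f x = (1 / 2) * (x 0 - 2 * x 1) ^ 2)
    (xp : EuclideanSpace ℝ (Fin 2)) (h0 : xp 0 = 3/2) (h1 : xp 1 = 1) :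
    HasGradientAt f gvec xp := by
  rw [hasGradientAt_iff_hasFDerivAt]
  have hL : Lmap xp = -(1/2) := by rw [Lmap_apply, h0, h1]; norm_num
  have h : HasFDerivAt f ((-(1/2) : ℝ) • (Lmap : EuclideanSpace ℝ (Fin 2) →L[ℝ] ℝ)) xp := by
    have : HasFDerivAt (fun x => (1/2 : ℝ) * (Lmap x)^2)
        ((-(1/2) : ℝ) • (Lmap : EuclideanSpace ℝ (Fin 2) →L[ℝ] ℝ)) xp := by
      have hd : HasFDerivAt Lmap (Lmap : EuclideanSpace ℝ (Fin 2) →L[ℝ] ℝ) xp :=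
        Lmap.hasFDerivAt
      have := (hd.mul hd).const_mul (1/2 : ℝ)
      refine (this.congr_fderiv ?_).congr_of_eventuallyEq (Filter.Eventually.of_forall fun x => ?_)
      · refine ContinuousLinearMap.ext fun y => ?_
        simp [hL]
        ring
      · simp only [Pi.mul_apply]; ring
    convert this using 1
    ext x
    rw [hf, Lmap_apply]
  refine h.congr_fderiv ?_
  refine ContinuousLinearMap.ext fun y => ?_
  have : ((InnerProductSpace.toDual ℝ (EuclideanSpace ℝ (Fin 2))) gvec) y = inner ℝ gvec y := rfl
  rw [this, PiLp.inner_apply]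
  simp [gvec, Fin.sum_univ_two, Lmap_apply]
  ring

/-- Convex but not aiming (counterexample, Appendix B). -/
theorem convex_but_not_aiming :
    ∀ f : EuclideanSpace ℝ (Fin 2) → ℝ,
      (∀ x, f x = (1 / 2) * (x 0 - 2 * x 1) ^ 2) →
      ∀ xp : EuclideanSpace ℝ (Fin 2), xp 0 = 3 / 2 → xp 1 = 1 →
        ConvexOn ℝ Set.univ f
        ∧ (∀ x, f 0 ≤ f x)
        ∧ gradient f xp 0 = -(1 / 2) ∧ gradient f xp 1 = 1
        ∧ (xp 0 - 0) * Real.sign (gradient f xp 0)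
            + (xp 1 - 0) * Real.sign (gradient f xp 1) = -(1 / 2)
        ∧ (-(1 / 2) : ℝ) < 0 := by
  intro f hf xp h0 h1
  have hgrad : gradient f xp = gvec := (key f hf xp h0 h1).gradient
  have hg0 : gradient f xp 0 = -(1/2) := by rw [hgrad]; rfl
  have hg1 : gradient f xp 1 = 1 := by rw [hgrad]; rfl
  refine ⟨?_, ?_, hg0, hg1, ?_, by norm_num⟩
  · have hsq : ConvexOn ℝ Set.univ (fun t : ℝ => t ^ 2) := Even.convexOn_pow even_two
    have hc := (hsq.comp_linearMap (Lmap.toLinearMap)).smul (by norm_num : (0:ℝ) ≤ 1/2)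
    simp only [Set.preimage_univ] at hc
    refine hc.congr fun x _ => ?_
    rw [hf]
    simp [Lmap_apply, smul_eq_mul]
  · intro x
    rw [hf, hf]
    have : (0 : EuclideanSpace ℝ (Fin 2)) 0 = 0 := rfl
    rw [this]
    have : (0 : EuclideanSpace ℝ (Fin 2)) 1 = 0 := rfl
    rw [this]
    norm_num
    positivity
  · rw [hg0, hg1, h0, h1]
    rw [Real.sign_of_neg (by norm_num), Real.sign_of_pos (by norm_num)]
    norm_num
end
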